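/- arXiv:0804.2115 — 2 statements merged into one kernel-verified Lean document; each statement's English description precedes it below -/
import Mathlib

section
/- Let S be a Gröbner–Shirshov basis in k⟨X⟩ ⊗ k⟨Y⟩ and s₁, s₂ ∈ S. If a normal word w satisfies w = a₁s̄₁b₁ = a₂s̄₂b₂ for some a₁, b₁, a₂, b₂ ∈ N, then a₁s₁b₁ - a₂s₂b₂ can be written as Σ αᵢcᵢsᵢdᵢ with sᵢ ∈ S, cᵢ, dᵢ ∈ N, and cᵢs̄ᵢdᵢ < w. -/
/-- A monomial order: a well-founded strict total order compatible with multiplication. -/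
def MonOrd {M : Type*} [Monoid M] (lt : M → M → Prop) : Prop :=
  IsStrictTotalOrder M lt ∧ WellFounded lt ∧
    ∀ u v w₁ w₂ : M, lt u v → lt (w₁ * u * w₂) (w₁ * v * w₂)

/-- `m` is the leading word of `f` with respect to the order `lt`. -/
def IsLeadR {k M : Type*} [Semiring k] (lt : M → M → Prop)
    (f : MonoidAlgebra k M) (m : M) : Prop :=
  m ∈ f.coeff.support ∧ ∀ u ∈ f.coeff.support, u ≠ m → lt u m

/-- `f` is monic: its leading coefficient is `1`. -/
def MonicR {k M : Type*} [Semiring k] (lt : M → M → Prop) (f : MonoidAlgebra k M) : Prop :=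
  ∃ m, IsLeadR lt f m ∧ f.coeff m = 1

/-- The monomial `m` viewed as an element of the monoid algebra. -/
noncomputable def mono (k : Type*) {M : Type*} [Semiring k] [Monoid M] (m : M) :
    MonoidAlgebra k M := MonoidAlgebra.of k M m

/-- `h` is trivial modulo `(S, w)`: it is a linear combination `Σ αᵢ aᵢ sᵢ bᵢ`
with `sᵢ ∈ S` and leading words `aᵢ s̄ᵢ bᵢ < w`. -/
def TrivModR {k M : Type*} [Semiring k] [Monoid M] (lt : M → M → Prop)
    (S : Set (MonoidAlgebra k M)) (w : M) (h : MonoidAlgebra k M) : Prop :=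
  ∃ (n : ℕ) (α : Fin n → k) (a b : Fin n → M) (s : Fin n → MonoidAlgebra k M),
    (∀ i, s i ∈ S) ∧
    h = ∑ i, α i • (mono k (a i) * s i * mono k (b i)) ∧
    ∀ i, ∃ m, IsLeadR lt (s i) m ∧ lt (a i * m * b i) w

/-- Gröbner–Shirshov basis in a free associative algebra `k⟨Z⟩`:
all intersection and inclusion compositions are trivial. -/
def FIsGSB {k Z : Type*} [Ring k] (lt : FreeMonoid Z → FreeMonoid Z → Prop)
    (S : Set (MonoidAlgebra k (FreeMonoid Z))) : Prop :=
  (∀ s ∈ S, MonicR lt s) ∧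
  ∀ f ∈ S, ∀ g ∈ S, ∀ mf mg : FreeMonoid Z, IsLeadR lt f mf → IsLeadR lt g mg →
    ((∀ a b : FreeMonoid Z, mf * b = a * mg →
        (mf * b).length < mf.length + mg.length →
        TrivModR lt S (mf * b) (f * mono k b - mono k a * g)) ∧
     (∀ a b : FreeMonoid Z, mf = a * mg * b →
        TrivModR lt S mf (f - mono k a * g * mono k b)))

/-- the deg-lex order on words induced by an order on letters -/
def degLex {A : Type*} (ltA : A → A → Prop) (u v : FreeMonoid A) : Prop :=
  u.length < v.length ∨ (u.length = v.length ∧ List.Lex ltA u.toList v.toList)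

/-- Normal words of `k⟨X⟩ ⊗ k⟨Y⟩`: the monoid `X* × Y*`
(whose multiplication is `(u^X u^Y)(v^X v^Y) = u^X v^X u^Y v^Y`). -/
abbrev NW (X Y : Type*) := FreeMonoid X × FreeMonoid Y

/-- the (deg-)lex order on `N = X*Y*` built from orders on `X*` and `Y*`:
`u > v` iff `u^X > v^X` or (`u^X = v^X` and `u^Y > v^Y`). -/
def lexNW {X Y : Type*} (ltX : FreeMonoid X → FreeMonoid X → Prop)
    (ltY : FreeMonoid Y → FreeMonoid Y → Prop) (u v : NW X Y) : Prop :=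
  ltX u.1 v.1 ∨ (u.1 = v.1 ∧ ltY u.2 v.2)

/-- All compositions `(f,g)_w = p` in `k⟨X⟩ ⊗ k⟨Y⟩`, where `mf, mg` are the leading
words of `f, g`.  The cases are: 1.1 `X`-inclusion only, 1.2 `Y`-inclusion only,
1.3 `X,Y`-inclusion, 1.4 `X,Y`-skew-inclusion, 2.1 `X`-intersection only,
2.2 `Y`-intersection only, 2.3 `X,Y`-intersection, 2.4 `X,Y`-skew-intersection,
3.1 `X`-inclusion and `Y`-intersection, 3.2 `X`-intersection and `Y`-inclusion. -/
def IsComp {k X Y : Type*} [Ring k] (f g : MonoidAlgebra k (NW X Y))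
    (mf mg : NW X Y) (p : MonoidAlgebra k (NW X Y)) (w : NW X Y) : Prop :=
  let e : NW X Y → MonoidAlgebra k (NW X Y) := fun m => mono k m
  let fx := mf.1; let fy := mf.2; let gx := mg.1; let gy := mg.2
  -- 1.1 X-inclusion only
  (∃ (a b : FreeMonoid X) (c : FreeMonoid Y), fx = a * gx * b ∧
     ((w = (fx, fy * c * gy) ∧ p = f * e (1, c * gy) - e (a, fy * c) * g * e (b, 1)) ∨
      (w = (fx, gy * c * fy) ∧ p = e (1, gy * c) * f - e (a, 1) * g * e (b, c * fy)))) ∨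
  -- 1.2 Y-inclusion only
  (∃ (a : FreeMonoid X) (c d : FreeMonoid Y), fy = c * gy * d ∧
     ((w = (fx * a * gx, fy) ∧ p = f * e (a * gx, 1) - e (fx * a, c) * g * e (1, d)) ∨
      (w = (gx * a * fx, fy) ∧ p = e (gx * a, 1) * f - e (1, c) * g * e (a * fx, d)))) ∨
  -- 1.3 X,Y-inclusion
  (∃ (a b : FreeMonoid X) (c d : FreeMonoid Y), fx = a * gx * b ∧ fy = c * gy * d ∧
     w = (fx, fy) ∧ p = f - e (a, c) * g * e (b, d)) ∨
  -- 1.4 X,Y-skew-inclusion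
  (∃ (a b : FreeMonoid X) (c d : FreeMonoid Y), fx = a * gx * b ∧ gy = c * fy * d ∧
     w = (fx, gy) ∧ p = e (1, c) * f * e (1, d) - e (a, 1) * g * e (b, 1)) ∨
  -- 2.1 X-intersection only
  (∃ (a b : FreeMonoid X) (c : FreeMonoid Y), fx * a = b * gx ∧
     (fx * a).length < fx.length + gx.length ∧
     ((w = (fx * a, fy * c * gy) ∧ p = f * e (a, c * gy) - e (b, fy * c) * g) ∨
      (w = (fx * a, gy * c * fy) ∧
        p = e (1, gy * c) * f * e (a, 1) - e (b, 1) * g * e (1, c * fy)))) ∨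
  -- 2.2 Y-intersection only
  (∃ (a : FreeMonoid X) (c d : FreeMonoid Y), fy * c = d * gy ∧
     (fy * c).length < fy.length + gy.length ∧
     ((w = (fx * a * gx, fy * c) ∧ p = f * e (a * gx, c) - e (fx * a, d) * g) ∨
      (w = (gx * a * fx, fy * c) ∧
        p = e (gx * a, 1) * f * e (1, c) - e (1, d) * g * e (a * fx, 1)))) ∨
  -- 2.3 X,Y-intersection
  (∃ (a b : FreeMonoid X) (c d : FreeMonoid Y), fx * a = b * gx ∧ fy * c = d * gy ∧
     (fx * a).length < fx.length + gx.length ∧ (fy * c).length < fy.length + gy.length ∧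
     w = (fx * a, fy * c) ∧ p = f * e (a, c) - e (b, d) * g) ∨
  -- 2.4 X,Y-skew-intersection
  (∃ (a b : FreeMonoid X) (c d : FreeMonoid Y), fx * a = b * gx ∧ c * fy = gy * d ∧
     (fx * a).length < fx.length + gx.length ∧ (c * fy).length < fy.length + gy.length ∧
     w = (fx * a, c * fy) ∧ p = e (1, c) * f * e (a, 1) - e (b, 1) * g * e (1, d)) ∨
  -- 3.1 X-inclusion and Y-intersection
  (∃ (a b : FreeMonoid X) (c d : FreeMonoid Y), fx = a * gx * b ∧
     ((fy * c = d * gy ∧ (fy * c).length < fy.length + gy.length ∧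
        w = (fx, fy * c) ∧ p = f * e (1, c) - e (a, d) * g * e (b, 1)) ∨
      (c * fy = gy * d ∧ (c * fy).length < fy.length + gy.length ∧
        w = (fx, c * fy) ∧ p = e (1, c) * f - e (a, 1) * g * e (b, d)))) ∨
  -- 3.2 X-intersection and Y-inclusion
  (∃ (a b : FreeMonoid X) (c d : FreeMonoid Y), fx * a = b * gx ∧
     (fx * a).length < fx.length + gx.length ∧
     ((fy = c * gy * d ∧ w = (fx * a, fy) ∧ p = f * e (a, 1) - e (b, c) * g * e (1, d)) ∨
      (gy = c * fy * d ∧ w = (fx * a, gy) ∧ p = e (1, c) * f * e (a, d) - e (b, 1) * g)))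

/-- Gröbner–Shirshov basis in `k⟨X⟩ ⊗ k⟨Y⟩`: a set of monic polynomials
all of whose compositions are trivial. -/
def IsGSB {k X Y : Type*} [Ring k] (lt : NW X Y → NW X Y → Prop)
    (S : Set (MonoidAlgebra k (NW X Y))) : Prop :=
  (∀ s ∈ S, MonicR lt s) ∧
  ∀ f ∈ S, ∀ g ∈ S, ∀ (mf mg : NW X Y) (p : MonoidAlgebra k (NW X Y)) (w : NW X Y),
    IsLeadR lt f mf → IsLeadR lt g mg → IsComp f g mf mg p w → TrivModR lt S w p

/-- the abelianization map `γ : X* → [X]`, with `[X]` the free commutative monoid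
on `X` realized as `Multiplicative (Multiset X)`. -/
def gam {X : Type*} (u : FreeMonoid X) : Multiplicative (Multiset X) :=
  Multiplicative.ofAdd (↑u.toList : Multiset X)

/-- the order on `X*` lifted from a monomial order on `[X]`:
`u > v` iff `γ(u) > γ(v)`, or `γ(u) = γ(v)` and `u >_lex v`. -/
def liftOrd {X : Type*} [LinearOrder X]
    (ltC : Multiplicative (Multiset X) → Multiplicative (Multiset X) → Prop)
    (u v : FreeMonoid X) : Prop :=
  ltC (gam u) (gam v) ∨ (gam u = gam v ∧ List.Lex (· < ·) u.toList v.toList)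

/-- `δ` on monomials: the weakly increasing word representing a commutative monomial. -/
noncomputable def dword {X : Type*} [LinearOrder X] (m : Multiplicative (Multiset X)) :
    FreeMonoid X :=
  FreeMonoid.ofList (Multiset.sort (Multiplicative.toAdd m) (· ≤ ·))

/-- the lexicographic splitting `δ : k[X] → k⟨X⟩`. -/
noncomputable def deltaMap {k X : Type*} [Semiring k] [LinearOrder X]
    (f : MonoidAlgebra k (Multiplicative (Multiset X))) :
    MonoidAlgebra k (FreeMonoid X) :=
  MonoidAlgebra.ofCoeff (Finsupp.mapDomain dword f.coeff)

/-- the set `S₁ = {xᵢxⱼ - xⱼxᵢ : xᵢ > xⱼ}` of commutators in `k⟨X⟩`. -/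
noncomputable def commSet (k X : Type*) [Ring k] [LinearOrder X] :
    Set (MonoidAlgebra k (FreeMonoid X)) :=
  {p | ∃ i j : X, j < i ∧
    p = mono k (FreeMonoid.of i * FreeMonoid.of j) - mono k (FreeMonoid.of j * FreeMonoid.of i)}

/-- `U(m)`: commutative monomials in the variables strictly between the least and the
greatest variable occurring in `m`. -/
def UU {X : Type*} [LinearOrder X] (m : Multiplicative (Multiset X)) :
    Set (Multiplicative (Multiset X)) :=
  {u | ∀ y ∈ Multiplicative.toAdd u,
     (∃ z ∈ Multiplicative.toAdd m, z < y) ∧ (∃ z ∈ Multiplicative.toAdd m, y < z)}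

/-- Normal words of `k[X] ⊗ k⟨Y⟩`: the monoid `[X]Y*`. -/
abbrev CW (X Y : Type*) := Multiplicative (Multiset X) × FreeMonoid Y

/-- the order on `[X]Y*`: compare the `Y`-part first, then the `[X]`-part. -/
def cwOrd {X Y : Type*}
    (ltC : Multiplicative (Multiset X) → Multiplicative (Multiset X) → Prop)
    (ltY : FreeMonoid Y → FreeMonoid Y → Prop) (u v : CW X Y) : Prop :=
  ltY u.2 v.2 ∨ (u.2 = v.2 ∧ ltC u.1 v.1)

/-- the order on `X*Y*` lifted from the order on `[X]Y*`, breaking ties by `lex`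
on the `X`-component. -/
def liftNW {X Y : Type*} [LinearOrder X]
    (ltC : Multiplicative (Multiset X) → Multiplicative (Multiset X) → Prop)
    (ltY : FreeMonoid Y → FreeMonoid Y → Prop) (u v : NW X Y) : Prop :=
  cwOrd ltC ltY (gam u.1, u.2) (gam v.1, v.2) ∨
    ((gam u.1 = gam v.1 ∧ u.2 = v.2) ∧ List.Lex (· < ·) u.1.toList v.1.toList)

/-- `δ : k[X] ⊗ k⟨Y⟩ → k⟨X⟩ ⊗ k⟨Y⟩`, the lexicographic splitting extended by the
identity on `Y`-words. -/
noncomputable def deltaNW {k X Y : Type*} [Semiring k] [LinearOrder X]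
    (f : MonoidAlgebra k (CW X Y)) : MonoidAlgebra k (NW X Y) :=
  MonoidAlgebra.ofCoeff (Finsupp.mapDomain (fun m : CW X Y => ((dword m.1, m.2) : NW X Y)) f.coeff)

/-- Mikhalev–Zolotykh compositions in `k[X] ⊗ k⟨Y⟩`: inclusion `C₁`, overlap `C₂`
and external `C₃` compositions, where `mf`, `mg` are the leading words of `f`, `g`,
and `L = lcm(mf^X, mg^X)`. -/
def MZComp {k X Y : Type*} [Ring k] [DecidableEq X]
    (ltC : Multiplicative (Multiset X) → Multiplicative (Multiset X) → Prop)
    (f g : MonoidAlgebra k (CW X Y)) (mf mg : CW X Y)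
    (p : MonoidAlgebra k (CW X Y)) (w : CW X Y) : Prop :=
  let e : CW X Y → MonoidAlgebra k (CW X Y) := fun m => mono k m
  let fX := Multiplicative.toAdd mf.1; let gX := Multiplicative.toAdd mg.1
  let L : Multiset X := fX ∪ gX
  let Lf : Multiplicative (Multiset X) := Multiplicative.ofAdd (L - fX)
  let Lg : Multiplicative (Multiset X) := Multiplicative.ofAdd (L - gX)
  -- C₁ : inclusion
  (∃ c d : FreeMonoid Y, mf.2 = c * mg.2 * d ∧
     (mf.2 = mg.2 → (mg.1 = mf.1 ∨ ltC mg.1 mf.1)) ∧ (mg.2 = 1 → c = 1) ∧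
     w = (Multiplicative.ofAdd L, mf.2) ∧
     p = e (Lf, 1) * f - e (Lg, c) * g * e (1, d)) ∨
  -- C₂ : overlap
  (∃ c d c₀ : FreeMonoid Y, c₀ ≠ 1 ∧ mf.2 = c * c₀ ∧ mg.2 = c₀ * d ∧
     w = (Multiplicative.ofAdd L, mf.2 * d) ∧
     p = e (Lf, 1) * f * e (1, d) - e (Lg, c) * g) ∨
  -- C₃ : external
  (∃ c₀ : FreeMonoid Y, fX ∩ gX ≠ 0 ∧ mf.2 ≠ 1 ∧ mg.2 ≠ 1 ∧
     w = (Multiplicative.ofAdd L, mf.2 * c₀ * mg.2) ∧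
     p = e (Lf, 1) * f * e (1, c₀ * mg.2) - e (Lg, mf.2 * c₀) * g)

/-- Gröbner–Shirshov basis in `k[X] ⊗ k⟨Y⟩` in the sense of Mikhalev–Zolotykh. -/
def MZGSB {k X Y : Type*} [Ring k] [DecidableEq X]
    (ltC : Multiplicative (Multiset X) → Multiplicative (Multiset X) → Prop)
    (ltY : FreeMonoid Y → FreeMonoid Y → Prop)
    (S : Set (MonoidAlgebra k (CW X Y))) : Prop :=
  (∀ s ∈ S, MonicR (cwOrd ltC ltY) s) ∧
  ∀ f ∈ S, ∀ g ∈ S, ∀ (mf mg : CW X Y) (p : MonoidAlgebra k (CW X Y)) (w : CW X Y),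
    IsLeadR (cwOrd ltC ltY) f mf → IsLeadR (cwOrd ltC ltY) g mg →
    MZComp ltC f g mf mg p w → TrivModR (cwOrd ltC ltY) S w p

/-! ### Auxiliary infrastructure -/

section AuxInfra
variable {k M : Type*} [Field k] [Monoid M] {lt : M → M → Prop}
  {S : Set (MonoidAlgebra k M)} {w : M}

theorem mono_mul' (u v : M) : mono k (u * v) = mono k u * mono k v := map_mul _ _ _

theorem mono_def' (u : M) : mono k u = MonoidAlgebra.single u 1 := MonoidAlgebra.of_apply _ _ _

theorem TrivModR.add {h₁ h₂ : MonoidAlgebra k M} (H₁ : TrivModR lt S w h₁)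
    (H₂ : TrivModR lt S w h₂) : TrivModR lt S w (h₁ + h₂) := by
  obtain ⟨n, α, a, b, s, hs, he, hl⟩ := H₁
  obtain ⟨n', α', a', b', s', hs', he', hl'⟩ := H₂
  refine ⟨n + n', Fin.addCases α α', Fin.addCases a a', Fin.addCases b b',
    Fin.addCases s s', fun i => ?_, ?_, fun i => ?_⟩
  · refine Fin.addCases (fun i => by simp [hs i]) (fun i => by simp [hs' i]) i
  · rw [Fin.sum_univ_add]
    simp only [Fin.addCases_left, Fin.addCases_right, he, he']
  · refine Fin.addCases (fun i => by simpa using hl i) (fun i => by simpa using hl' i) i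

theorem TrivModR.neg {h : MonoidAlgebra k M} (H : TrivModR lt S w h) :
    TrivModR lt S w (-h) := by
  obtain ⟨n, α, a, b, s, hs, he, hl⟩ := H
  exact ⟨n, fun i => -α i, a, b, s, hs, by simp [he, neg_smul,
    ← Finset.sum_neg_distrib], hl⟩

theorem TrivModR.sub {h₁ h₂ : MonoidAlgebra k M} (H₁ : TrivModR lt S w h₁)
    (H₂ : TrivModR lt S w h₂) : TrivModR lt S w (h₁ - h₂) := by
  rw [sub_eq_add_neg]; exact H₁.add H₂.neg

theorem TrivModR.ofSum {s : MonoidAlgebra k M} (hsS : s ∈ S) {m : M}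
    (hm : IsLeadR lt s m) (T : Finset M) (coef : M → k) (c d : M → M)
    (hlt : ∀ t ∈ T, lt (c t * m * d t) w) :
    TrivModR lt S w (∑ t ∈ T, coef t • (mono k (c t) * s * mono k (d t))) := by
  classical
  refine ⟨T.card, fun i => coef (T.equivFin.symm i), fun i => c (T.equivFin.symm i),
    fun i => d (T.equivFin.symm i), fun _ => s, fun _ => hsS, ?_, fun i => ⟨m, hm, ?_⟩⟩
  · rw [← Finset.sum_coe_sort T (fun t => coef t • (mono k (c t) * s * mono k (d t))),
      ← Equiv.sum_comp T.equivFin.symm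
      (fun x : T => coef (x : M) • (mono k (c x) * s * mono k (d x)))]
  · exact hlt _ (T.equivFin.symm i).2

theorem TrivModR.frame {p : MonoidAlgebra k M} {w₀ : M} (hcompat :
    ∀ u v w₁ w₂ : M, lt u v → lt (w₁ * u * w₂) (w₁ * v * w₂))
    (H : TrivModR lt S w₀ p) (l r : M) :
    TrivModR lt S (l * w₀ * r) (mono k l * p * mono k r) := by
  obtain ⟨n, α, a, b, s, hs, he, hl⟩ := H
  refine ⟨n, α, fun i => l * a i, fun i => b i * r, s, hs, ?_, fun i => ?_⟩
  · rw [he, Finset.mul_sum, Finset.sum_mul]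
    refine Finset.sum_congr rfl fun i _ => ?_
    rw [mul_smul_comm, smul_mul_assoc, mono_mul', mono_mul']
    noncomm_ring
  · obtain ⟨m, hm, hltm⟩ := hl i
    refine ⟨m, hm, ?_⟩
    have := hcompat _ _ l r hltm
    simpa [mul_assoc] using this

theorem expand_frame (f : MonoidAlgebra k M) (c d : M) :
    mono k c * f * mono k d = ∑ t ∈ f.coeff.support, f.coeff t • mono k (c * t * d) := by
  classical
  conv_lhs => rw [← MonoidAlgebra.sum_coeff_single f]
  rw [Finsupp.sum, Finset.mul_sum, Finset.sum_mul]
  refine Finset.sum_congr rfl fun t _ => ?_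
  rw [mono_def', mono_def', mono_def']
  show MonoidAlgebra.single c 1 * MonoidAlgebra.single t (f.coeff t) * MonoidAlgebra.single d 1 = _
  rw [MonoidAlgebra.single_mul_single, MonoidAlgebra.single_mul_single,
    MonoidAlgebra.smul_single', one_mul, mul_one]

omit [Monoid M] in
theorem IsLeadR.unique (htrans : ∀ {a b c}, lt a b → lt b c → lt a c)
    (hirr : ∀ a, ¬ lt a a) {f : MonoidAlgebra k M} {m m' : M}
    (h : IsLeadR lt f m) (h' : IsLeadR lt f m') : m = m' := by
  by_contra hne
  exact hirr m (htrans (h'.2 m h.1 hne) (h.2 m' h'.1 (Ne.symm hne)))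

theorem tail_lt {f : MonoidAlgebra k M} {m : M} (hm : IsLeadR lt f m) (h1 : f.coeff m = 1) :
    ∀ t ∈ (f - mono k m).coeff.support, lt t m := by
  classical
  intro t ht
  rw [Finsupp.mem_support_iff] at ht
  have happ : (f - mono k m).coeff t = f.coeff t - (MonoidAlgebra.single m 1).coeff t := by
    rw [mono_def', MonoidAlgebra.coeff_sub, Finsupp.sub_apply]
  by_cases htm : t = m
  · subst htm
    rw [happ, MonoidAlgebra.single_apply, if_pos rfl, h1, sub_self] at ht
    exact absurd rfl ht
  · refine hm.2 t ?_ htm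
    rw [Finsupp.mem_support_iff]
    intro h0
    rw [happ, MonoidAlgebra.single_apply, if_neg (Ne.symm htm), h0, sub_zero] at ht
    exact ht rfl

/-- The sequential (disjoint occurrences, same orientation) case. -/
theorem seq_case (hcompat : ∀ u v w₁ w₂ : M, lt u v → lt (w₁ * u * w₂) (w₁ * v * w₂))
    {s₁ s₂ : MonoidAlgebra k M} (hs₁ : s₁ ∈ S) (hs₂ : s₂ ∈ S) {m₁ m₂ : M}
    (hm₁ : IsLeadR lt s₁ m₁) (h1 : s₁.coeff m₁ = 1)
    (hm₂ : IsLeadR lt s₂ m₂) (h2 : s₂.coeff m₂ = 1) (P Q R : M) :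
    TrivModR lt S (P * m₁ * Q * m₂ * R)
      (mono k P * s₁ * mono k (Q * m₂ * R) - mono k (P * m₁ * Q) * s₂ * mono k R) := by
  classical
  have hd : mono k P * s₁ * mono k (Q * m₂ * R) - mono k (P * m₁ * Q) * s₂ * mono k R
      = (mono k P * (s₁ - mono k m₁) * mono k Q) * s₂ * mono k R
        - mono k P * s₁ * (mono k Q * (s₂ - mono k m₂) * mono k R) := by
    simp only [mono_mul']; noncomm_ring
  rw [hd]
  refine TrivModR.sub ?_ ?_
  · rw [expand_frame (s₁ - mono k m₁) P Q, Finset.sum_mul, Finset.sum_mul]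
    have hc : ∀ t ∈ (s₁ - mono k m₁).coeff.support,
        (s₁ - mono k m₁).coeff t • mono k (P * t * Q) * s₂ * mono k R
        = (s₁ - mono k m₁).coeff t • (mono k (P * t * Q) * s₂ * mono k R) := by
      intro t _; rw [smul_mul_assoc, smul_mul_assoc]
    rw [Finset.sum_congr rfl hc]
    refine TrivModR.ofSum hs₂ hm₂ _ _ _ _ (fun t ht => ?_)
    have := hcompat t m₁ P (Q * m₂ * R) (tail_lt hm₁ h1 t ht)
    simpa [mul_assoc] using this
  · rw [expand_frame (s₂ - mono k m₂) Q R, Finset.mul_sum]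
    have hc : ∀ t ∈ (s₂ - mono k m₂).coeff.support,
        mono k P * s₁ * ((s₂ - mono k m₂).coeff t • mono k (Q * t * R))
        = (s₂ - mono k m₂).coeff t • (mono k P * s₁ * mono k (Q * t * R)) := by
      intro t _; rw [mul_smul_comm]
    rw [Finset.sum_congr rfl hc]
    refine TrivModR.ofSum hs₁ hm₁ _ _ _ _ (fun t ht => ?_)
    have := hcompat t m₂ (P * m₁ * Q) R (tail_lt hm₂ h2 t ht)
    simpa [mul_assoc] using this

end AuxInfra

/-- The cross (disjoint occurrences, opposite orientations) case, in a product monoid. -/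
theorem cross_case {k M₁ M₂ : Type*} [Field k] [Monoid M₁] [Monoid M₂]
    {lt : M₁ × M₂ → M₁ × M₂ → Prop} {S : Set (MonoidAlgebra k (M₁ × M₂))}
    (hcompat : ∀ u v w₁ w₂ : M₁ × M₂, lt u v → lt (w₁ * u * w₂) (w₁ * v * w₂))
    {s₁ s₂ : MonoidAlgebra k (M₁ × M₂)} (hs₁ : s₁ ∈ S) (hs₂ : s₂ ∈ S)
    {fx gx : M₁} {fy gy : M₂}
    (hm₁ : IsLeadR lt s₁ (fx, fy)) (h1 : s₁.coeff (fx, fy) = 1)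
    (hm₂ : IsLeadR lt s₂ (gx, gy)) (h2 : s₂.coeff (gx, gy) = 1)
    (A u B : M₁) (C v D : M₂) :
    TrivModR lt S (A * fx * u * gx * B, C * gy * v * fy * D)
      (mono k (A, C * gy * v) * s₁ * mono k (u * gx * B, D)
        - mono k (A * fx * u, C) * s₂ * mono k (B, v * fy * D)) := by
  classical
  set T : MonoidAlgebra k (M₁ × M₂) :=
    ∑ t ∈ s₁.coeff.support, ∑ t' ∈ s₂.coeff.support,
      (s₁.coeff t * s₂.coeff t') • mono k (A * t.1 * u * t'.1 * B, C * t'.2 * v * t.2 * D) with hT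
  have claim1 : ∑ t' ∈ s₂.coeff.support,
      s₂.coeff t' • (mono k (A, C * t'.2 * v) * s₁ * mono k (u * t'.1 * B, D)) = T := by
    rw [hT, Finset.sum_comm]
    refine Finset.sum_congr rfl fun t' _ => ?_
    rw [expand_frame s₁ (A, C * t'.2 * v) (u * t'.1 * B, D), Finset.smul_sum]
    refine Finset.sum_congr rfl fun t _ => ?_
    rw [smul_smul, mul_comm (s₂.coeff t') (s₁.coeff t)]
    congr 2
    ext <;> simp [mul_assoc]
  have claim2 : ∑ t ∈ s₁.coeff.support,
      s₁.coeff t • (mono k (A * t.1 * u, C) * s₂ * mono k (B, v * t.2 * D)) = T := by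
    rw [hT]
    refine Finset.sum_congr rfl fun t _ => ?_
    rw [expand_frame s₂ (A * t.1 * u, C) (B, v * t.2 * D), Finset.smul_sum]
    refine Finset.sum_congr rfl fun t' _ => ?_
    rw [smul_smul]
    congr 2
    ext <;> simp [mul_assoc]
  have e1 : mono k (A, C * gy * v) * s₁ * mono k (u * gx * B, D)
      = T - ∑ t' ∈ s₂.coeff.support.erase (gx, gy),
          s₂.coeff t' • (mono k (A, C * t'.2 * v) * s₁ * mono k (u * t'.1 * B, D)) := by
    rw [← claim1, ← Finset.add_sum_erase _ _ hm₂.1, h2, one_smul, add_sub_cancel_right]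
  have e2 : mono k (A * fx * u, C) * s₂ * mono k (B, v * fy * D)
      = T - ∑ t ∈ s₁.coeff.support.erase (fx, fy),
          s₁.coeff t • (mono k (A * t.1 * u, C) * s₂ * mono k (B, v * t.2 * D)) := by
    rw [← claim2, ← Finset.add_sum_erase _ _ hm₁.1, h1, one_smul, add_sub_cancel_right]
  rw [e1, e2, sub_sub_sub_cancel_left]
  refine TrivModR.sub
    (TrivModR.ofSum hs₂ hm₂ _ _ (fun t => (A * t.1 * u, C)) (fun t => (B, v * t.2 * D))
      fun t ht => ?_)
    (TrivModR.ofSum hs₁ hm₁ _ _ (fun t' => (A, C * t'.2 * v)) (fun t' => (u * t'.1 * B, D))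
      fun t' ht' => ?_)
  · have hlt : lt t (fx, fy) := hm₁.2 t (Finset.mem_of_mem_erase ht)
      (Finset.ne_of_mem_erase ht)
    have h := hcompat t (fx, fy) (A, C * gy * v) (u * gx * B, D) hlt
    have eq1 : (A, C * gy * v) * t * (u * gx * B, D)
        = (A * t.1 * u, C) * (gx, gy) * (B, v * t.2 * D) := by
      apply Prod.ext <;> simp [mul_assoc]
    have eq2 : (A, C * gy * v) * (fx, fy) * (u * gx * B, D)
        = ((A * fx * u * gx * B, C * gy * v * fy * D) : M₁ × M₂) := by
      apply Prod.ext <;> simp [mul_assoc]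
    rwa [eq1, eq2] at h
  · have hlt : lt t' (gx, gy) := hm₂.2 t' (Finset.mem_of_mem_erase ht')
      (Finset.ne_of_mem_erase ht')
    have h := hcompat t' (gx, gy) (A * fx * u, C) (B, v * fy * D) hlt
    have eq1 : (A * fx * u, C) * t' * (B, v * fy * D)
        = (A, C * t'.2 * v) * (fx, fy) * (u * t'.1 * B, D) := by
      apply Prod.ext <;> simp [mul_assoc]
    have eq2 : (A * fx * u, C) * (gx, gy) * (B, v * fy * D)
        = ((A * fx * u * gx * B, C * gy * v * fy * D) : M₁ × M₂) := by
      apply Prod.ext <;> simp [mul_assoc]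
    rwa [eq1, eq2] at h

/-! ### Word combinatorics -/

theorem split_pref {α : Type*} {A B C D : List α} (h : A ++ B = C ++ D)
    (hle : A.length ≤ C.length) : ∃ u, C = A ++ u ∧ B = u ++ D := by
  rcases List.append_eq_append_iff.1 h with ⟨u, h1, h2⟩ | ⟨c, h1, h2⟩
  · exact ⟨u, h1, h2⟩
  · have hlen : c.length = 0 := by
      have := congrArg List.length h1; simp at this; omega
    have hc : c = [] := List.length_eq_zero_iff.1 hlen
    subst hc
    exact ⟨[], by simp [h1], by simp [h2]⟩

theorem list_half {α : Type*} {F G A₁ B₁ A₂ B₂ : List α}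
    (h : A₁ ++ F ++ B₁ = A₂ ++ G ++ B₂) (hle : A₁.length ≤ A₂.length) :
    (∃ u, A₂ = A₁ ++ F ++ u ∧ B₁ = u ++ G ++ B₂) ∨
    (∃ a b, F = a ++ G ++ b ∧ A₂ = A₁ ++ a ∧ B₂ = b ++ B₁) ∨
    (∃ a b, F ++ a = b ++ G ∧ (F ++ a).length < F.length + G.length ∧
      A₂ = A₁ ++ b ∧ B₁ = a ++ B₂) := by
  rw [List.append_assoc, List.append_assoc] at h
  obtain ⟨u, hA, hFB⟩ := split_pref h hle
  rcases le_or_gt F.length u.length with hFu | huF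
  · obtain ⟨u', hu, hB⟩ := split_pref hFB hFu
    exact Or.inl ⟨u', by rw [hA, hu, List.append_assoc], by rw [hB, List.append_assoc]⟩
  · obtain ⟨t, hF, htB⟩ := split_pref hFB.symm (le_of_lt huF)
    have htlen : 0 < t.length := by
      have := congrArg List.length hF; simp at this; omega
    rcases le_or_gt G.length t.length with hGt | htG
    · obtain ⟨b, ht, hB⟩ := split_pref htB hGt
      exact Or.inr (Or.inl ⟨u, b, by rw [hF, ht, List.append_assoc], hA, hB⟩)
    · obtain ⟨a, hG, hB⟩ := split_pref htB.symm (le_of_lt htG)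
      refine Or.inr (Or.inr ⟨a, u, ?_, ?_, hA, hB⟩)
      · rw [hF, hG, List.append_assoc]
      · have h1 := congrArg List.length hG
        simp [List.length_append] at h1 ⊢
        omega

theorem list_two_fact {α : Type*} {F G A₁ B₁ A₂ B₂ : List α}
    (h : A₁ ++ F ++ B₁ = A₂ ++ G ++ B₂) :
    (∃ u, A₂ = A₁ ++ F ++ u ∧ B₁ = u ++ G ++ B₂) ∨
    (∃ u, A₁ = A₂ ++ G ++ u ∧ B₂ = u ++ F ++ B₁) ∨
    (∃ a b, F = a ++ G ++ b ∧ A₂ = A₁ ++ a ∧ B₂ = b ++ B₁) ∨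
    (∃ a b, G = a ++ F ++ b ∧ A₁ = A₂ ++ a ∧ B₁ = b ++ B₂) ∨
    (∃ a b, F ++ a = b ++ G ∧ (F ++ a).length < F.length + G.length ∧
      A₂ = A₁ ++ b ∧ B₁ = a ++ B₂) ∨
    (∃ a b, G ++ a = b ++ F ∧ (G ++ a).length < G.length + F.length ∧
      A₁ = A₂ ++ b ∧ B₂ = a ++ B₁) := by
  rcases le_total A₁.length A₂.length with hle | hle
  · rcases list_half h hle with h1 | h1 | h1
    · exact Or.inl h1
    · exact Or.inr (Or.inr (Or.inl h1))
    · exact Or.inr (Or.inr (Or.inr (Or.inr (Or.inl h1))))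
  · rcases list_half h.symm hle with h1 | h1 | h1
    · exact Or.inr (Or.inl h1)
    · exact Or.inr (Or.inr (Or.inr (Or.inl h1)))
    · exact Or.inr (Or.inr (Or.inr (Or.inr (Or.inr h1))))

open FreeMonoid in
theorem fm_two_fact {α : Type*} {F G A₁ B₁ A₂ B₂ : FreeMonoid α}
    (h : A₁ * F * B₁ = A₂ * G * B₂) :
    (∃ u, A₂ = A₁ * F * u ∧ B₁ = u * G * B₂) ∨
    (∃ u, A₁ = A₂ * G * u ∧ B₂ = u * F * B₁) ∨
    (∃ a b, F = a * G * b ∧ A₂ = A₁ * a ∧ B₂ = b * B₁) ∨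
    (∃ a b, G = a * F * b ∧ A₁ = A₂ * a ∧ B₁ = b * B₂) ∨
    (∃ a b, F * a = b * G ∧ (F * a).length < F.length + G.length ∧
      A₂ = A₁ * b ∧ B₁ = a * B₂) ∨
    (∃ a b, G * a = b * F ∧ (G * a).length < G.length + F.length ∧
      A₁ = A₂ * b ∧ B₂ = a * B₁) := by
  have hl : A₁.toList ++ F.toList ++ B₁.toList = A₂.toList ++ G.toList ++ B₂.toList := by
    have := congrArg toList h
    simpa [toList_mul] using this
  have inj : ∀ {x y : FreeMonoid α}, x.toList = y.toList → x = y := fun h => toList.injective h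
  have lenl : ∀ x : FreeMonoid α, x.length = x.toList.length := fun _ => rfl
  rcases list_two_fact hl with ⟨u, h1, h2⟩ | ⟨u, h1, h2⟩ | ⟨a, b, h1, h2, h3⟩ |
    ⟨a, b, h1, h2, h3⟩ | ⟨a, b, h1, h2, h3, h4⟩ | ⟨a, b, h1, h2, h3, h4⟩
  · exact Or.inl ⟨ofList u, inj (by simpa [toList_mul] using h1),
      inj (by simpa [toList_mul] using h2)⟩
  · exact Or.inr (Or.inl ⟨ofList u, inj (by simpa [toList_mul] using h1),
      inj (by simpa [toList_mul] using h2)⟩)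
  · exact Or.inr (Or.inr (Or.inl ⟨ofList a, ofList b, inj (by simpa [toList_mul] using h1),
      inj (by simpa [toList_mul] using h2), inj (by simpa [toList_mul] using h3)⟩))
  · exact Or.inr (Or.inr (Or.inr (Or.inl ⟨ofList a, ofList b,
      inj (by simpa [toList_mul] using h1),
      inj (by simpa [toList_mul] using h2), inj (by simpa [toList_mul] using h3)⟩)))
  · refine Or.inr (Or.inr (Or.inr (Or.inr (Or.inl ⟨ofList a, ofList b,
      inj (by simpa [toList_mul] using h1), ?_,
      inj (by simpa [toList_mul] using h3), inj (by simpa [toList_mul] using h4)⟩))))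
    simpa [lenl, toList_mul, List.length_append] using h2
  · refine Or.inr (Or.inr (Or.inr (Or.inr (Or.inr ⟨ofList a, ofList b,
      inj (by simpa [toList_mul] using h1), ?_,
      inj (by simpa [toList_mul] using h3), inj (by simpa [toList_mul] using h4)⟩))))
    simpa [lenl, toList_mul, List.length_append] using h2
/-! ### Facts about `lexNW` and framed compositions -/

section FrameLemmas
variable {k M : Type*} [Field k] [Monoid M]

theorem frame3 (l u v r : M) (g : MonoidAlgebra k M) :
    mono k l * (mono k u * g * mono k v) * mono k r = mono k (l * u) * g * mono k (v * r) := by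
  simp only [mono_mul']; noncomm_ring

theorem frame2l (l u r : M) (g : MonoidAlgebra k M) :
    mono k l * (mono k u * g) * mono k r = mono k (l * u) * g * mono k r := by
  simp only [mono_mul']; noncomm_ring

theorem frame2r (l v r : M) (g : MonoidAlgebra k M) :
    mono k l * (g * mono k v) * mono k r = mono k l * g * mono k (v * r) := by
  simp only [mono_mul']; noncomm_ring
end FrameLemmas

section NWCase
variable {k X Y : Type*} [Field k] {ltX : FreeMonoid X → FreeMonoid X → Prop}
  {ltY : FreeMonoid Y → FreeMonoid Y → Prop} {S : Set (MonoidAlgebra k (NW X Y))}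

theorem lexNW_compat (hX : MonOrd ltX) (hY : MonOrd ltY) :
    ∀ u v w₁ w₂ : NW X Y, lexNW ltX ltY u v → lexNW ltX ltY (w₁ * u * w₂) (w₁ * v * w₂) := by
  intro u v w₁ w₂ h
  unfold lexNW at h ⊢
  rcases h with h | ⟨he, h⟩
  · exact Or.inl (by simpa [Prod.fst_mul] using hX.2.2 u.1 v.1 w₁.1 w₂.1 h)
  · exact Or.inr ⟨by simp [Prod.fst_mul, he],
      by simpa [Prod.snd_mul] using hY.2.2 u.2 v.2 w₁.2 w₂.2 h⟩

theorem lexNW_trans (hX : MonOrd ltX) (hY : MonOrd ltY) {a b c : NW X Y}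
    (h1 : lexNW ltX ltY a b) (h2 : lexNW ltX ltY b c) : lexNW ltX ltY a c := by
  have tX := hX.1.toIsStrictOrder.toIsTrans.trans
  have tY := hY.1.toIsStrictOrder.toIsTrans.trans
  unfold lexNW at h1 h2 ⊢
  rcases h1 with h1 | ⟨e1, h1⟩ <;> rcases h2 with h2 | ⟨e2, h2⟩
  · exact Or.inl (tX _ _ _ h1 h2)
  · exact Or.inl (e2 ▸ h1)
  · exact Or.inl (e1 ▸ h2)
  · exact Or.inr ⟨e1.trans e2, tY _ _ _ h1 h2⟩

theorem lexNW_irrefl (hX : MonOrd ltX) (hY : MonOrd ltY) (a : NW X Y) :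
    ¬ lexNW ltX ltY a a := by
  unfold lexNW
  rintro (h | ⟨-, h⟩)
  · exact hX.1.toIsStrictOrder.toIrrefl.irrefl _ h
  · exact hY.1.toIsStrictOrder.toIrrefl.irrefl _ h

theorem gsb_monic (hX : MonOrd ltX) (hY : MonOrd ltY) (hS : IsGSB (lexNW ltX ltY) S)
    {s : MonoidAlgebra k (NW X Y)} {m : NW X Y} (hs : s ∈ S)
    (hm : IsLeadR (lexNW ltX ltY) s m) : s.coeff m = 1 := by
  obtain ⟨m', hm', h1⟩ := hS.1 s hs
  have hmm : m = m' :=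
    IsLeadR.unique (k := k) (M := NW X Y) (lt := lexNW ltX ltY)
      (fun {a b c} h h' => lexNW_trans hX hY h h') (lexNW_irrefl hX hY) hm hm'
  rw [hmm]; exact h1

theorem comp_frame (hX : MonOrd ltX) (hY : MonOrd ltY) (hS : IsGSB (lexNW ltX ltY) S)
    {s₁ s₂ p : MonoidAlgebra k (NW X Y)} {m₁ m₂ w₀ : NW X Y}
    (hs₁ : s₁ ∈ S) (hs₂ : s₂ ∈ S) (hm₁ : IsLeadR (lexNW ltX ltY) s₁ m₁)
    (hm₂ : IsLeadR (lexNW ltX ltY) s₂ m₂) (hc : IsComp s₁ s₂ m₁ m₂ p w₀) (l r : NW X Y) :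
    TrivModR (lexNW ltX ltY) S (l * w₀ * r) (mono k l * p * mono k r) :=
  (hS.2 s₁ hs₁ s₂ hs₂ m₁ m₂ p w₀ hm₁ hm₂ hc).frame (lexNW_compat hX hY) l r

variable {s₁ s₂ : MonoidAlgebra k (NW X Y)} {fx gx : FreeMonoid X} {fy gy : FreeMonoid Y}

/- Case 1.3 : X,Y-inclusion -/
theorem case_XIf_YIf (hX : MonOrd ltX) (hY : MonOrd ltY) (hS : IsGSB (lexNW ltX ltY) S)
    (hs₁ : s₁ ∈ S) (hs₂ : s₂ ∈ S)
    (hm₁ : IsLeadR (lexNW ltX ltY) s₁ (fx, fy)) (hm₂ : IsLeadR (lexNW ltX ltY) s₂ (gx, gy))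
    (A₁ B₁ : FreeMonoid X) (C₁ E₁ : FreeMonoid Y) (a b : FreeMonoid X) (c d : FreeMonoid Y)
    (hfx : fx = a * gx * b) (hfy : fy = c * gy * d) :
    TrivModR (lexNW ltX ltY) S (A₁ * fx * B₁, C₁ * fy * E₁)
      (mono k (A₁, C₁) * s₁ * mono k (B₁, E₁)
        - mono k (A₁ * a, C₁ * c) * s₂ * mono k (b * B₁, d * E₁)) := by
  have hcomp : IsComp s₁ s₂ (fx, fy) (gx, gy)
      (s₁ - mono k (a, c) * s₂ * mono k (b, d)) (fx, fy) := by
    refine Or.inr (Or.inr (Or.inl ⟨a, b, c, d, hfx, hfy, rfl, rfl⟩))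
  have H := comp_frame hX hY hS hs₁ hs₂ hm₁ hm₂ hcomp (A₁, C₁) (B₁, E₁)
  have hw : ((A₁, C₁) : NW X Y) * (fx, fy) * (B₁, E₁) = (A₁ * fx * B₁, C₁ * fy * E₁) := by
    apply Prod.ext <;> simp
  rw [hw] at H
  simp only [mul_sub, sub_mul, frame3, frame2l, frame2r] at H
  simpa only [Prod.mk_mul_mk] using H
end NWCase
section NWCases2
variable {k X Y : Type*} [Field k] {ltX : FreeMonoid X → FreeMonoid X → Prop}
  {ltY : FreeMonoid Y → FreeMonoid Y → Prop} {S : Set (MonoidAlgebra k (NW X Y))}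
  {s₁ s₂ : MonoidAlgebra k (NW X Y)} {fx gx : FreeMonoid X} {fy gy : FreeMonoid Y}

variable (hX : MonOrd ltX) (hY : MonOrd ltY) (hS : IsGSB (lexNW ltX ltY) S)
  (hs₁ : s₁ ∈ S) (hs₂ : s₂ ∈ S)
  (hm₁ : IsLeadR (lexNW ltX ltY) s₁ (fx, fy)) (hm₂ : IsLeadR (lexNW ltX ltY) s₂ (gx, gy))

include hX hY hS hs₁ hs₂ hm₁ hm₂

/- Case 1.1 alt1 -/
theorem case_XIf_Ydf (A₁ B₁ : FreeMonoid X) (C₁ E₂ : FreeMonoid Y)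
    (a b : FreeMonoid X) (v : FreeMonoid Y) (hfx : fx = a * gx * b) :
    TrivModR (lexNW ltX ltY) S (A₁ * fx * B₁, C₁ * fy * (v * gy * E₂))
      (mono k (A₁, C₁) * s₁ * mono k (B₁, v * gy * E₂)
        - mono k (A₁ * a, C₁ * fy * v) * s₂ * mono k (b * B₁, E₂)) := by
  have hcomp : IsComp s₁ s₂ (fx, fy) (gx, gy)
      (s₁ * mono k (1, v * gy) - mono k (a, fy * v) * s₂ * mono k (b, 1))
      (fx, fy * v * gy) :=
    Or.inl ⟨a, b, v, hfx, Or.inl ⟨rfl, rfl⟩⟩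
  have H := comp_frame hX hY hS hs₁ hs₂ hm₁ hm₂ hcomp (A₁, C₁) (B₁, E₂)
  have hw : ((A₁, C₁) : NW X Y) * (fx, fy * v * gy) * (B₁, E₂)
      = (A₁ * fx * B₁, C₁ * fy * (v * gy * E₂)) := by
    apply Prod.ext <;> simp [mul_assoc]
  rw [hw] at H
  simp only [mul_sub, sub_mul, frame3, frame2l, frame2r] at H
  simpa only [Prod.mk_mul_mk, one_mul, mul_one, mul_assoc] using H

/- Case 1.1 alt2 -/
theorem case_XIf_Ydg (A₁ B₁ : FreeMonoid X) (C₂ E₁ : FreeMonoid Y)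
    (a b : FreeMonoid X) (v : FreeMonoid Y) (hfx : fx = a * gx * b) :
    TrivModR (lexNW ltX ltY) S (A₁ * fx * B₁, C₂ * gy * v * fy * E₁)
      (mono k (A₁, C₂ * gy * v) * s₁ * mono k (B₁, E₁)
        - mono k (A₁ * a, C₂) * s₂ * mono k (b * B₁, v * fy * E₁)) := by
  have hcomp : IsComp s₁ s₂ (fx, fy) (gx, gy)
      (mono k (1, gy * v) * s₁ - mono k (a, 1) * s₂ * mono k (b, v * fy))
      (fx, gy * v * fy) :=
    Or.inl ⟨a, b, v, hfx, Or.inr ⟨rfl, rfl⟩⟩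
  have H := comp_frame hX hY hS hs₁ hs₂ hm₁ hm₂ hcomp (A₁, C₂) (B₁, E₁)
  have hw : ((A₁, C₂) : NW X Y) * (fx, gy * v * fy) * (B₁, E₁)
      = (A₁ * fx * B₁, C₂ * gy * v * fy * E₁) := by
    apply Prod.ext <;> simp [mul_assoc]
  rw [hw] at H
  simp only [mul_sub, sub_mul, frame3, frame2l, frame2r] at H
  simpa only [Prod.mk_mul_mk, one_mul, mul_one, mul_assoc] using H

/- Case 1.2 alt1 -/
theorem case_Xdf_YIf (A₁ B₂ : FreeMonoid X) (C₁ E₁ : FreeMonoid Y)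
    (u : FreeMonoid X) (c d : FreeMonoid Y) (hfy : fy = c * gy * d) :
    TrivModR (lexNW ltX ltY) S (A₁ * fx * (u * gx * B₂), C₁ * fy * E₁)
      (mono k (A₁, C₁) * s₁ * mono k (u * gx * B₂, E₁)
        - mono k (A₁ * fx * u, C₁ * c) * s₂ * mono k (B₂, d * E₁)) := by
  have hcomp : IsComp s₁ s₂ (fx, fy) (gx, gy)
      (s₁ * mono k (u * gx, 1) - mono k (fx * u, c) * s₂ * mono k (1, d))
      (fx * u * gx, fy) :=
    Or.inr (Or.inl ⟨u, c, d, hfy, Or.inl ⟨rfl, rfl⟩⟩)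
  have H := comp_frame hX hY hS hs₁ hs₂ hm₁ hm₂ hcomp (A₁, C₁) (B₂, E₁)
  have hw : ((A₁, C₁) : NW X Y) * (fx * u * gx, fy) * (B₂, E₁)
      = (A₁ * fx * (u * gx * B₂), C₁ * fy * E₁) := by
    apply Prod.ext <;> simp [mul_assoc]
  rw [hw] at H
  simp only [mul_sub, sub_mul, frame3, frame2l, frame2r] at H
  simpa only [Prod.mk_mul_mk, one_mul, mul_one, mul_assoc] using H

/- Case 1.2 alt2 -/
theorem case_Xdg_YIf (A₂ B₁ : FreeMonoid X) (C₁ E₁ : FreeMonoid Y)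
    (u : FreeMonoid X) (c d : FreeMonoid Y) (hfy : fy = c * gy * d) :
    TrivModR (lexNW ltX ltY) S (A₂ * gx * u * fx * B₁, C₁ * fy * E₁)
      (mono k (A₂ * gx * u, C₁) * s₁ * mono k (B₁, E₁)
        - mono k (A₂, C₁ * c) * s₂ * mono k (u * fx * B₁, d * E₁)) := by
  have hcomp : IsComp s₁ s₂ (fx, fy) (gx, gy)
      (mono k (gx * u, 1) * s₁ - mono k (1, c) * s₂ * mono k (u * fx, d))
      (gx * u * fx, fy) :=
    Or.inr (Or.inl ⟨u, c, d, hfy, Or.inr ⟨rfl, rfl⟩⟩)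
  have H := comp_frame hX hY hS hs₁ hs₂ hm₁ hm₂ hcomp (A₂, C₁) (B₁, E₁)
  have hw : ((A₂, C₁) : NW X Y) * (gx * u * fx, fy) * (B₁, E₁)
      = (A₂ * gx * u * fx * B₁, C₁ * fy * E₁) := by
    apply Prod.ext <;> simp [mul_assoc]
  rw [hw] at H
  simp only [mul_sub, sub_mul, frame3, frame2l, frame2r] at H
  simpa only [Prod.mk_mul_mk, one_mul, mul_one, mul_assoc] using H

/- Case 1.4 -/
theorem case_XIf_YIg (A₁ B₁ : FreeMonoid X) (C₂ E₂ : FreeMonoid Y)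
    (a b : FreeMonoid X) (c d : FreeMonoid Y)
    (hfx : fx = a * gx * b) (hgy : gy = c * fy * d) :
    TrivModR (lexNW ltX ltY) S (A₁ * fx * B₁, C₂ * c * fy * (d * E₂))
      (mono k (A₁, C₂ * c) * s₁ * mono k (B₁, d * E₂)
        - mono k (A₁ * a, C₂) * s₂ * mono k (b * B₁, E₂)) := by
  have hcomp : IsComp s₁ s₂ (fx, fy) (gx, gy)
      (mono k (1, c) * s₁ * mono k (1, d) - mono k (a, 1) * s₂ * mono k (b, 1))
      (fx, gy) :=
    Or.inr (Or.inr (Or.inr (Or.inl ⟨a, b, c, d, hfx, hgy, rfl, rfl⟩)))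
  have H := comp_frame hX hY hS hs₁ hs₂ hm₁ hm₂ hcomp (A₁, C₂) (B₁, E₂)
  have hw : ((A₁, C₂) : NW X Y) * (fx, gy) * (B₁, E₂)
      = (A₁ * fx * B₁, C₂ * c * fy * (d * E₂)) := by
    apply Prod.ext <;> simp [hgy, mul_assoc]
  rw [hw] at H
  simp only [mul_sub, sub_mul, frame3, frame2l, frame2r] at H
  simpa only [Prod.mk_mul_mk, one_mul, mul_one, mul_assoc] using H

/- Case 2.1 alt1 -/
theorem case_XOf_Ydf (A₁ B₂ : FreeMonoid X) (C₁ E₂ : FreeMonoid Y)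
    (a b : FreeMonoid X) (v : FreeMonoid Y) (hx : fx * a = b * gx)
    (hlenx : (fx * a).length < fx.length + gx.length) :
    TrivModR (lexNW ltX ltY) S (A₁ * fx * (a * B₂), C₁ * fy * (v * gy * E₂))
      (mono k (A₁, C₁) * s₁ * mono k (a * B₂, v * gy * E₂)
        - mono k (A₁ * b, C₁ * fy * v) * s₂ * mono k (B₂, E₂)) := by
  have hcomp : IsComp s₁ s₂ (fx, fy) (gx, gy)
      (s₁ * mono k (a, v * gy) - mono k (b, fy * v) * s₂)
      (fx * a, fy * v * gy) :=
    Or.inr (Or.inr (Or.inr (Or.inr (Or.inl ⟨a, b, v, hx, hlenx, Or.inl ⟨rfl, rfl⟩⟩))))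
  have H := comp_frame hX hY hS hs₁ hs₂ hm₁ hm₂ hcomp (A₁, C₁) (B₂, E₂)
  have hw : ((A₁, C₁) : NW X Y) * (fx * a, fy * v * gy) * (B₂, E₂)
      = (A₁ * fx * (a * B₂), C₁ * fy * (v * gy * E₂)) := by
    apply Prod.ext <;> simp [mul_assoc]
  rw [hw] at H
  simp only [mul_sub, sub_mul, frame3, frame2l, frame2r] at H
  simpa only [Prod.mk_mul_mk, one_mul, mul_one, mul_assoc] using H

/- Case 2.1 alt2 -/
theorem case_XOf_Ydg (A₁ B₂ : FreeMonoid X) (C₂ E₁ : FreeMonoid Y)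
    (a b : FreeMonoid X) (v : FreeMonoid Y) (hx : fx * a = b * gx)
    (hlenx : (fx * a).length < fx.length + gx.length) :
    TrivModR (lexNW ltX ltY) S (A₁ * fx * (a * B₂), C₂ * gy * v * fy * E₁)
      (mono k (A₁, C₂ * gy * v) * s₁ * mono k (a * B₂, E₁)
        - mono k (A₁ * b, C₂) * s₂ * mono k (B₂, v * fy * E₁)) := by
  have hcomp : IsComp s₁ s₂ (fx, fy) (gx, gy)
      (mono k (1, gy * v) * s₁ * mono k (a, 1) - mono k (b, 1) * s₂ * mono k (1, v * fy))
      (fx * a, gy * v * fy) :=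
    Or.inr (Or.inr (Or.inr (Or.inr (Or.inl ⟨a, b, v, hx, hlenx, Or.inr ⟨rfl, rfl⟩⟩))))
  have H := comp_frame hX hY hS hs₁ hs₂ hm₁ hm₂ hcomp (A₁, C₂) (B₂, E₁)
  have hw : ((A₁, C₂) : NW X Y) * (fx * a, gy * v * fy) * (B₂, E₁)
      = (A₁ * fx * (a * B₂), C₂ * gy * v * fy * E₁) := by
    apply Prod.ext <;> simp [mul_assoc]
  rw [hw] at H
  simp only [mul_sub, sub_mul, frame3, frame2l, frame2r] at H
  simpa only [Prod.mk_mul_mk, one_mul, mul_one, mul_assoc] using H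

/- Case 2.2 alt1 -/
theorem case_Xdf_YOf (A₁ B₂ : FreeMonoid X) (C₁ E₂ : FreeMonoid Y)
    (u : FreeMonoid X) (c d : FreeMonoid Y) (hy : fy * c = d * gy)
    (hleny : (fy * c).length < fy.length + gy.length) :
    TrivModR (lexNW ltX ltY) S (A₁ * fx * (u * gx * B₂), C₁ * fy * (c * E₂))
      (mono k (A₁, C₁) * s₁ * mono k (u * gx * B₂, c * E₂)
        - mono k (A₁ * fx * u, C₁ * d) * s₂ * mono k (B₂, E₂)) := by
  have hcomp : IsComp s₁ s₂ (fx, fy) (gx, gy)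
      (s₁ * mono k (u * gx, c) - mono k (fx * u, d) * s₂)
      (fx * u * gx, fy * c) :=
    Or.inr (Or.inr (Or.inr (Or.inr (Or.inr (Or.inl
      ⟨u, c, d, hy, hleny, Or.inl ⟨rfl, rfl⟩⟩)))))
  have H := comp_frame hX hY hS hs₁ hs₂ hm₁ hm₂ hcomp (A₁, C₁) (B₂, E₂)
  have hw : ((A₁, C₁) : NW X Y) * (fx * u * gx, fy * c) * (B₂, E₂)
      = (A₁ * fx * (u * gx * B₂), C₁ * fy * (c * E₂)) := by
    apply Prod.ext <;> simp [mul_assoc]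
  rw [hw] at H
  simp only [mul_sub, sub_mul, frame3, frame2l, frame2r] at H
  simpa only [Prod.mk_mul_mk, one_mul, mul_one, mul_assoc] using H

/- Case 2.2 alt2 -/
theorem case_Xdg_YOf (A₂ B₁ : FreeMonoid X) (C₁ E₂ : FreeMonoid Y)
    (u : FreeMonoid X) (c d : FreeMonoid Y) (hy : fy * c = d * gy)
    (hleny : (fy * c).length < fy.length + gy.length) :
    TrivModR (lexNW ltX ltY) S (A₂ * gx * u * fx * B₁, C₁ * fy * (c * E₂))
      (mono k (A₂ * gx * u, C₁) * s₁ * mono k (B₁, c * E₂)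
        - mono k (A₂, C₁ * d) * s₂ * mono k (u * fx * B₁, E₂)) := by
  have hcomp : IsComp s₁ s₂ (fx, fy) (gx, gy)
      (mono k (gx * u, 1) * s₁ * mono k (1, c) - mono k (1, d) * s₂ * mono k (u * fx, 1))
      (gx * u * fx, fy * c) :=
    Or.inr (Or.inr (Or.inr (Or.inr (Or.inr (Or.inl
      ⟨u, c, d, hy, hleny, Or.inr ⟨rfl, rfl⟩⟩)))))
  have H := comp_frame hX hY hS hs₁ hs₂ hm₁ hm₂ hcomp (A₂, C₁) (B₁, E₂)
  have hw : ((A₂, C₁) : NW X Y) * (gx * u * fx, fy * c) * (B₁, E₂)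
      = (A₂ * gx * u * fx * B₁, C₁ * fy * (c * E₂)) := by
    apply Prod.ext <;> simp [mul_assoc]
  rw [hw] at H
  simp only [mul_sub, sub_mul, frame3, frame2l, frame2r] at H
  simpa only [Prod.mk_mul_mk, one_mul, mul_one, mul_assoc] using H

/- Case 2.3 -/
theorem case_XOf_YOf (A₁ B₂ : FreeMonoid X) (C₁ E₂ : FreeMonoid Y)
    (a b : FreeMonoid X) (c d : FreeMonoid Y) (hx : fx * a = b * gx)
    (hlenx : (fx * a).length < fx.length + gx.length) (hy : fy * c = d * gy)
    (hleny : (fy * c).length < fy.length + gy.length) :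
    TrivModR (lexNW ltX ltY) S (A₁ * fx * (a * B₂), C₁ * fy * (c * E₂))
      (mono k (A₁, C₁) * s₁ * mono k (a * B₂, c * E₂)
        - mono k (A₁ * b, C₁ * d) * s₂ * mono k (B₂, E₂)) := by
  have hcomp : IsComp s₁ s₂ (fx, fy) (gx, gy)
      (s₁ * mono k (a, c) - mono k (b, d) * s₂)
      (fx * a, fy * c) :=
    Or.inr (Or.inr (Or.inr (Or.inr (Or.inr (Or.inr (Or.inl
      ⟨a, b, c, d, hx, hy, hlenx, hleny, rfl, rfl⟩))))))
  have H := comp_frame hX hY hS hs₁ hs₂ hm₁ hm₂ hcomp (A₁, C₁) (B₂, E₂)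
  have hw : ((A₁, C₁) : NW X Y) * (fx * a, fy * c) * (B₂, E₂)
      = (A₁ * fx * (a * B₂), C₁ * fy * (c * E₂)) := by
    apply Prod.ext <;> simp [mul_assoc]
  rw [hw] at H
  simp only [mul_sub, sub_mul, frame3, frame2l, frame2r] at H
  simpa only [Prod.mk_mul_mk, one_mul, mul_one, mul_assoc] using H

/- Case 2.4 -/
theorem case_XOf_YOg (A₁ B₂ : FreeMonoid X) (C₂ E₁ : FreeMonoid Y)
    (a b : FreeMonoid X) (c' d' : FreeMonoid Y) (hx : fx * a = b * gx)
    (hlenx : (fx * a).length < fx.length + gx.length) (hy : gy * c' = d' * fy)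
    (hleny : (gy * c').length < gy.length + fy.length) :
    TrivModR (lexNW ltX ltY) S (A₁ * fx * (a * B₂), C₂ * d' * fy * E₁)
      (mono k (A₁, C₂ * d') * s₁ * mono k (a * B₂, E₁)
        - mono k (A₁ * b, C₂) * s₂ * mono k (B₂, c' * E₁)) := by
  have hcomp : IsComp s₁ s₂ (fx, fy) (gx, gy)
      (mono k (1, d') * s₁ * mono k (a, 1) - mono k (b, 1) * s₂ * mono k (1, c'))
      (fx * a, d' * fy) :=
    Or.inr (Or.inr (Or.inr (Or.inr (Or.inr (Or.inr (Or.inr (Or.inl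
      ⟨a, b, d', c', hx, hy.symm, hlenx,
        by rw [← hy]; exact hleny.trans_eq (Nat.add_comm _ _), rfl, rfl⟩)))))))
  have H := comp_frame hX hY hS hs₁ hs₂ hm₁ hm₂ hcomp (A₁, C₂) (B₂, E₁)
  have hw : ((A₁, C₂) : NW X Y) * (fx * a, d' * fy) * (B₂, E₁)
      = (A₁ * fx * (a * B₂), C₂ * d' * fy * E₁) := by
    apply Prod.ext <;> simp [mul_assoc]
  rw [hw] at H
  simp only [mul_sub, sub_mul, frame3, frame2l, frame2r] at H
  simpa only [Prod.mk_mul_mk, one_mul, mul_one, mul_assoc] using H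

/- Case 3.1 alt1 -/
theorem case_XIf_YOf (A₁ B₁ : FreeMonoid X) (C₁ E₂ : FreeMonoid Y)
    (a b : FreeMonoid X) (c d : FreeMonoid Y) (hfx : fx = a * gx * b)
    (hy : fy * c = d * gy) (hleny : (fy * c).length < fy.length + gy.length) :
    TrivModR (lexNW ltX ltY) S (A₁ * fx * B₁, C₁ * fy * (c * E₂))
      (mono k (A₁, C₁) * s₁ * mono k (B₁, c * E₂)
        - mono k (A₁ * a, C₁ * d) * s₂ * mono k (b * B₁, E₂)) := by
  have hcomp : IsComp s₁ s₂ (fx, fy) (gx, gy)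
      (s₁ * mono k (1, c) - mono k (a, d) * s₂ * mono k (b, 1))
      (fx, fy * c) :=
    Or.inr (Or.inr (Or.inr (Or.inr (Or.inr (Or.inr (Or.inr (Or.inr (Or.inl
      ⟨a, b, c, d, hfx, Or.inl ⟨hy, hleny, rfl, rfl⟩⟩))))))))
  have H := comp_frame hX hY hS hs₁ hs₂ hm₁ hm₂ hcomp (A₁, C₁) (B₁, E₂)
  have hw : ((A₁, C₁) : NW X Y) * (fx, fy * c) * (B₁, E₂)
      = (A₁ * fx * B₁, C₁ * fy * (c * E₂)) := by
    apply Prod.ext <;> simp [mul_assoc]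
  rw [hw] at H
  simp only [mul_sub, sub_mul, frame3, frame2l, frame2r] at H
  simpa only [Prod.mk_mul_mk, one_mul, mul_one, mul_assoc] using H

/- Case 3.1 alt2 -/
theorem case_XIf_YOg (A₁ B₁ : FreeMonoid X) (C₂ E₁ : FreeMonoid Y)
    (a b : FreeMonoid X) (c' d' : FreeMonoid Y) (hfx : fx = a * gx * b)
    (hy : gy * c' = d' * fy) (hleny : (gy * c').length < gy.length + fy.length) :
    TrivModR (lexNW ltX ltY) S (A₁ * fx * B₁, C₂ * d' * fy * E₁)
      (mono k (A₁, C₂ * d') * s₁ * mono k (B₁, E₁)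
        - mono k (A₁ * a, C₂) * s₂ * mono k (b * B₁, c' * E₁)) := by
  have hcomp : IsComp s₁ s₂ (fx, fy) (gx, gy)
      (mono k (1, d') * s₁ - mono k (a, 1) * s₂ * mono k (b, c'))
      (fx, d' * fy) :=
    Or.inr (Or.inr (Or.inr (Or.inr (Or.inr (Or.inr (Or.inr (Or.inr (Or.inl
      ⟨a, b, d', c', hfx, Or.inr ⟨hy.symm,
        by rw [← hy]; exact hleny.trans_eq (Nat.add_comm _ _), rfl, rfl⟩⟩))))))))
  have H := comp_frame hX hY hS hs₁ hs₂ hm₁ hm₂ hcomp (A₁, C₂) (B₁, E₁)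
  have hw : ((A₁, C₂) : NW X Y) * (fx, d' * fy) * (B₁, E₁)
      = (A₁ * fx * B₁, C₂ * d' * fy * E₁) := by
    apply Prod.ext <;> simp [mul_assoc]
  rw [hw] at H
  simp only [mul_sub, sub_mul, frame3, frame2l, frame2r] at H
  simpa only [Prod.mk_mul_mk, one_mul, mul_one, mul_assoc] using H

/- Case 3.2 alt1 -/
theorem case_XOf_YIf (A₁ B₂ : FreeMonoid X) (C₁ E₁ : FreeMonoid Y)
    (a b : FreeMonoid X) (c d : FreeMonoid Y) (hx : fx * a = b * gx)
    (hlenx : (fx * a).length < fx.length + gx.length) (hfy : fy = c * gy * d) :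
    TrivModR (lexNW ltX ltY) S (A₁ * fx * (a * B₂), C₁ * fy * E₁)
      (mono k (A₁, C₁) * s₁ * mono k (a * B₂, E₁)
        - mono k (A₁ * b, C₁ * c) * s₂ * mono k (B₂, d * E₁)) := by
  have hcomp : IsComp s₁ s₂ (fx, fy) (gx, gy)
      (s₁ * mono k (a, 1) - mono k (b, c) * s₂ * mono k (1, d))
      (fx * a, fy) :=
    Or.inr (Or.inr (Or.inr (Or.inr (Or.inr (Or.inr (Or.inr (Or.inr (Or.inr
      ⟨a, b, c, d, hx, hlenx, Or.inl ⟨hfy, rfl, rfl⟩⟩))))))))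
  have H := comp_frame hX hY hS hs₁ hs₂ hm₁ hm₂ hcomp (A₁, C₁) (B₂, E₁)
  have hw : ((A₁, C₁) : NW X Y) * (fx * a, fy) * (B₂, E₁)
      = (A₁ * fx * (a * B₂), C₁ * fy * E₁) := by
    apply Prod.ext <;> simp [mul_assoc]
  rw [hw] at H
  simp only [mul_sub, sub_mul, frame3, frame2l, frame2r] at H
  simpa only [Prod.mk_mul_mk, one_mul, mul_one, mul_assoc] using H

/- Case 3.2 alt2 -/
theorem case_XOf_YIg (A₁ B₂ : FreeMonoid X) (C₂ E₂ : FreeMonoid Y)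
    (a b : FreeMonoid X) (c d : FreeMonoid Y) (hx : fx * a = b * gx)
    (hlenx : (fx * a).length < fx.length + gx.length) (hgy : gy = c * fy * d) :
    TrivModR (lexNW ltX ltY) S (A₁ * fx * (a * B₂), C₂ * c * fy * (d * E₂))
      (mono k (A₁, C₂ * c) * s₁ * mono k (a * B₂, d * E₂)
        - mono k (A₁ * b, C₂) * s₂ * mono k (B₂, E₂)) := by
  have hcomp : IsComp s₁ s₂ (fx, fy) (gx, gy)
      (mono k (1, c) * s₁ * mono k (a, d) - mono k (b, 1) * s₂)
      (fx * a, gy) :=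
    Or.inr (Or.inr (Or.inr (Or.inr (Or.inr (Or.inr (Or.inr (Or.inr (Or.inr
      ⟨a, b, c, d, hx, hlenx, Or.inr ⟨hgy, rfl, rfl⟩⟩))))))))
  have H := comp_frame hX hY hS hs₁ hs₂ hm₁ hm₂ hcomp (A₁, C₂) (B₂, E₂)
  have hw : ((A₁, C₂) : NW X Y) * (fx * a, gy) * (B₂, E₂)
      = (A₁ * fx * (a * B₂), C₂ * c * fy * (d * E₂)) := by
    apply Prod.ext <;> simp [hgy, mul_assoc]
  rw [hw] at H
  simp only [mul_sub, sub_mul, frame3, frame2l, frame2r] at H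
  simpa only [Prod.mk_mul_mk, one_mul, mul_one, mul_assoc] using H

end NWCases2
section Wrappers

theorem TrivModR.flip {k M : Type*} [Field k] [Monoid M] {lt : M → M → Prop}
    {S : Set (MonoidAlgebra k M)} {w w' : M} {p q : MonoidAlgebra k M}
    (hw : w = w') (H : TrivModR lt S w' (q - p)) : TrivModR lt S w (p - q) := by
  subst hw
  have := H.neg
  rwa [neg_sub] at this

variable {k X Y : Type*} [Field k] {ltX : FreeMonoid X → FreeMonoid X → Prop}
  {ltY : FreeMonoid Y → FreeMonoid Y → Prop} {S : Set (MonoidAlgebra k (NW X Y))}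
  {s₁ s₂ : MonoidAlgebra k (NW X Y)} {fx gx : FreeMonoid X} {fy gy : FreeMonoid Y}

variable (hX : MonOrd ltX) (hY : MonOrd ltY) (hS : IsGSB (lexNW ltX ltY) S)
  (hs₁ : s₁ ∈ S) (hs₂ : s₂ ∈ S)
  (hm₁ : IsLeadR (lexNW ltX ltY) s₁ (fx, fy)) (hm₂ : IsLeadR (lexNW ltX ltY) s₂ (gx, gy))

include hX hY hS hs₁ hs₂ hm₁ hm₂

variable {A₁ B₁ A₂ B₂ a b u : FreeMonoid X} {C₁ E₁ C₂ E₂ c d v : FreeMonoid Y}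

theorem wcase_XIf_Ydf (hfx : fx = a * gx * b) (hA : A₂ = A₁ * a) (hB : B₂ = b * B₁)
    (hC : C₂ = C₁ * fy * v) (hE : E₁ = v * gy * E₂) :
    TrivModR (lexNW ltX ltY) S (A₁ * fx * B₁, C₁ * fy * E₁)
      (mono k (A₁, C₁) * s₁ * mono k (B₁, E₁) - mono k (A₂, C₂) * s₂ * mono k (B₂, E₂)) := by
  subst hA; subst hB; subst hC; subst hE
  exact case_XIf_Ydf hX hY hS hs₁ hs₂ hm₁ hm₂ A₁ B₁ C₁ E₂ a b v hfx

theorem wcase_XIf_Ydg (hfx : fx = a * gx * b) (hA : A₂ = A₁ * a) (hB : B₂ = b * B₁)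
    (hC : C₁ = C₂ * gy * v) (hE : E₂ = v * fy * E₁) :
    TrivModR (lexNW ltX ltY) S (A₁ * fx * B₁, C₁ * fy * E₁)
      (mono k (A₁, C₁) * s₁ * mono k (B₁, E₁) - mono k (A₂, C₂) * s₂ * mono k (B₂, E₂)) := by
  subst hA; subst hB; subst hC; subst hE
  exact case_XIf_Ydg hX hY hS hs₁ hs₂ hm₁ hm₂ A₁ B₁ C₂ E₁ a b v hfx

theorem wcase_Xdf_YIf (hfy : fy = c * gy * d) (hA : A₂ = A₁ * fx * u) (hB : B₁ = u * gx * B₂)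
    (hC : C₂ = C₁ * c) (hE : E₂ = d * E₁) :
    TrivModR (lexNW ltX ltY) S (A₁ * fx * B₁, C₁ * fy * E₁)
      (mono k (A₁, C₁) * s₁ * mono k (B₁, E₁) - mono k (A₂, C₂) * s₂ * mono k (B₂, E₂)) := by
  subst hA; subst hB; subst hC; subst hE
  exact case_Xdf_YIf hX hY hS hs₁ hs₂ hm₁ hm₂ A₁ B₂ C₁ E₁ u c d hfy

theorem wcase_Xdg_YIf (hfy : fy = c * gy * d) (hA : A₁ = A₂ * gx * u) (hB : B₂ = u * fx * B₁)
    (hC : C₂ = C₁ * c) (hE : E₂ = d * E₁) :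
    TrivModR (lexNW ltX ltY) S (A₁ * fx * B₁, C₁ * fy * E₁)
      (mono k (A₁, C₁) * s₁ * mono k (B₁, E₁) - mono k (A₂, C₂) * s₂ * mono k (B₂, E₂)) := by
  subst hA; subst hB; subst hC; subst hE
  exact case_Xdg_YIf hX hY hS hs₁ hs₂ hm₁ hm₂ A₂ B₁ C₁ E₁ u c d hfy

theorem wcase_XIf_YIf (hfx : fx = a * gx * b) (hfy : fy = c * gy * d)
    (hA : A₂ = A₁ * a) (hB : B₂ = b * B₁) (hC : C₂ = C₁ * c) (hE : E₂ = d * E₁) :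
    TrivModR (lexNW ltX ltY) S (A₁ * fx * B₁, C₁ * fy * E₁)
      (mono k (A₁, C₁) * s₁ * mono k (B₁, E₁) - mono k (A₂, C₂) * s₂ * mono k (B₂, E₂)) := by
  subst hA; subst hB; subst hC; subst hE
  exact case_XIf_YIf hX hY hS hs₁ hs₂ hm₁ hm₂ A₁ B₁ C₁ E₁ a b c d hfx hfy

theorem wcase_XIf_YIg (hfx : fx = a * gx * b) (hgy : gy = c * fy * d)
    (hA : A₂ = A₁ * a) (hB : B₂ = b * B₁) (hC : C₁ = C₂ * c) (hE : E₁ = d * E₂) :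
    TrivModR (lexNW ltX ltY) S (A₁ * fx * B₁, C₁ * fy * E₁)
      (mono k (A₁, C₁) * s₁ * mono k (B₁, E₁) - mono k (A₂, C₂) * s₂ * mono k (B₂, E₂)) := by
  subst hA; subst hB; subst hC; subst hE
  exact case_XIf_YIg hX hY hS hs₁ hs₂ hm₁ hm₂ A₁ B₁ C₂ E₂ a b c d hfx hgy

theorem wcase_XOf_Ydf (hx : fx * a = b * gx) (hlenx : (fx * a).length < fx.length + gx.length)
    (hA : A₂ = A₁ * b) (hB : B₁ = a * B₂) (hC : C₂ = C₁ * fy * v) (hE : E₁ = v * gy * E₂) :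
    TrivModR (lexNW ltX ltY) S (A₁ * fx * B₁, C₁ * fy * E₁)
      (mono k (A₁, C₁) * s₁ * mono k (B₁, E₁) - mono k (A₂, C₂) * s₂ * mono k (B₂, E₂)) := by
  subst hA; subst hB; subst hC; subst hE
  exact case_XOf_Ydf hX hY hS hs₁ hs₂ hm₁ hm₂ A₁ B₂ C₁ E₂ a b v hx hlenx

theorem wcase_XOf_Ydg (hx : fx * a = b * gx) (hlenx : (fx * a).length < fx.length + gx.length)
    (hA : A₂ = A₁ * b) (hB : B₁ = a * B₂) (hC : C₁ = C₂ * gy * v) (hE : E₂ = v * fy * E₁) :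
    TrivModR (lexNW ltX ltY) S (A₁ * fx * B₁, C₁ * fy * E₁)
      (mono k (A₁, C₁) * s₁ * mono k (B₁, E₁) - mono k (A₂, C₂) * s₂ * mono k (B₂, E₂)) := by
  subst hA; subst hB; subst hC; subst hE
  exact case_XOf_Ydg hX hY hS hs₁ hs₂ hm₁ hm₂ A₁ B₂ C₂ E₁ a b v hx hlenx

theorem wcase_Xdf_YOf (hy : fy * c = d * gy) (hleny : (fy * c).length < fy.length + gy.length)
    (hA : A₂ = A₁ * fx * u) (hB : B₁ = u * gx * B₂) (hC : C₂ = C₁ * d) (hE : E₁ = c * E₂) :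
    TrivModR (lexNW ltX ltY) S (A₁ * fx * B₁, C₁ * fy * E₁)
      (mono k (A₁, C₁) * s₁ * mono k (B₁, E₁) - mono k (A₂, C₂) * s₂ * mono k (B₂, E₂)) := by
  subst hA; subst hB; subst hC; subst hE
  exact case_Xdf_YOf hX hY hS hs₁ hs₂ hm₁ hm₂ A₁ B₂ C₁ E₂ u c d hy hleny

theorem wcase_Xdg_YOf (hy : fy * c = d * gy) (hleny : (fy * c).length < fy.length + gy.length)
    (hA : A₁ = A₂ * gx * u) (hB : B₂ = u * fx * B₁) (hC : C₂ = C₁ * d) (hE : E₁ = c * E₂) :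
    TrivModR (lexNW ltX ltY) S (A₁ * fx * B₁, C₁ * fy * E₁)
      (mono k (A₁, C₁) * s₁ * mono k (B₁, E₁) - mono k (A₂, C₂) * s₂ * mono k (B₂, E₂)) := by
  subst hA; subst hB; subst hC; subst hE
  exact case_Xdg_YOf hX hY hS hs₁ hs₂ hm₁ hm₂ A₂ B₁ C₁ E₂ u c d hy hleny

theorem wcase_XOf_YOf (hx : fx * a = b * gx) (hlenx : (fx * a).length < fx.length + gx.length)
    (hy : fy * c = d * gy) (hleny : (fy * c).length < fy.length + gy.length)
    (hA : A₂ = A₁ * b) (hB : B₁ = a * B₂) (hC : C₂ = C₁ * d) (hE : E₁ = c * E₂) :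
    TrivModR (lexNW ltX ltY) S (A₁ * fx * B₁, C₁ * fy * E₁)
      (mono k (A₁, C₁) * s₁ * mono k (B₁, E₁) - mono k (A₂, C₂) * s₂ * mono k (B₂, E₂)) := by
  subst hA; subst hB; subst hC; subst hE
  exact case_XOf_YOf hX hY hS hs₁ hs₂ hm₁ hm₂ A₁ B₂ C₁ E₂ a b c d hx hlenx hy hleny

theorem wcase_XOf_YOg (hx : fx * a = b * gx) (hlenx : (fx * a).length < fx.length + gx.length)
    (hy : gy * c = d * fy) (hleny : (gy * c).length < gy.length + fy.length)
    (hA : A₂ = A₁ * b) (hB : B₁ = a * B₂) (hC : C₁ = C₂ * d) (hE : E₂ = c * E₁) :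
    TrivModR (lexNW ltX ltY) S (A₁ * fx * B₁, C₁ * fy * E₁)
      (mono k (A₁, C₁) * s₁ * mono k (B₁, E₁) - mono k (A₂, C₂) * s₂ * mono k (B₂, E₂)) := by
  subst hA; subst hB; subst hC; subst hE
  exact case_XOf_YOg hX hY hS hs₁ hs₂ hm₁ hm₂ A₁ B₂ C₂ E₁ a b c d hx hlenx hy hleny

theorem wcase_XIf_YOf (hfx : fx = a * gx * b)
    (hy : fy * c = d * gy) (hleny : (fy * c).length < fy.length + gy.length)
    (hA : A₂ = A₁ * a) (hB : B₂ = b * B₁) (hC : C₂ = C₁ * d) (hE : E₁ = c * E₂) :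
    TrivModR (lexNW ltX ltY) S (A₁ * fx * B₁, C₁ * fy * E₁)
      (mono k (A₁, C₁) * s₁ * mono k (B₁, E₁) - mono k (A₂, C₂) * s₂ * mono k (B₂, E₂)) := by
  subst hA; subst hB; subst hC; subst hE
  exact case_XIf_YOf hX hY hS hs₁ hs₂ hm₁ hm₂ A₁ B₁ C₁ E₂ a b c d hfx hy hleny

theorem wcase_XIf_YOg (hfx : fx = a * gx * b)
    (hy : gy * c = d * fy) (hleny : (gy * c).length < gy.length + fy.length)
    (hA : A₂ = A₁ * a) (hB : B₂ = b * B₁) (hC : C₁ = C₂ * d) (hE : E₂ = c * E₁) :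
    TrivModR (lexNW ltX ltY) S (A₁ * fx * B₁, C₁ * fy * E₁)
      (mono k (A₁, C₁) * s₁ * mono k (B₁, E₁) - mono k (A₂, C₂) * s₂ * mono k (B₂, E₂)) := by
  subst hA; subst hB; subst hC; subst hE
  exact case_XIf_YOg hX hY hS hs₁ hs₂ hm₁ hm₂ A₁ B₁ C₂ E₁ a b c d hfx hy hleny

theorem wcase_XOf_YIf (hx : fx * a = b * gx) (hlenx : (fx * a).length < fx.length + gx.length)
    (hfy : fy = c * gy * d)
    (hA : A₂ = A₁ * b) (hB : B₁ = a * B₂) (hC : C₂ = C₁ * c) (hE : E₂ = d * E₁) :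
    TrivModR (lexNW ltX ltY) S (A₁ * fx * B₁, C₁ * fy * E₁)
      (mono k (A₁, C₁) * s₁ * mono k (B₁, E₁) - mono k (A₂, C₂) * s₂ * mono k (B₂, E₂)) := by
  subst hA; subst hB; subst hC; subst hE
  exact case_XOf_YIf hX hY hS hs₁ hs₂ hm₁ hm₂ A₁ B₂ C₁ E₁ a b c d hx hlenx hfy

theorem wcase_XOf_YIg (hx : fx * a = b * gx) (hlenx : (fx * a).length < fx.length + gx.length)
    (hgy : gy = c * fy * d)
    (hA : A₂ = A₁ * b) (hB : B₁ = a * B₂) (hC : C₁ = C₂ * c) (hE : E₁ = d * E₂) :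
    TrivModR (lexNW ltX ltY) S (A₁ * fx * B₁, C₁ * fy * E₁)
      (mono k (A₁, C₁) * s₁ * mono k (B₁, E₁) - mono k (A₂, C₂) * s₂ * mono k (B₂, E₂)) := by
  subst hA; subst hB; subst hC; subst hE
  exact case_XOf_YIg hX hY hS hs₁ hs₂ hm₁ hm₂ A₁ B₂ C₂ E₂ a b c d hx hlenx hgy

theorem wcase_df_df (hA : A₂ = A₁ * fx * u) (hB : B₁ = u * gx * B₂)
    (hC : C₂ = C₁ * fy * v) (hE : E₁ = v * gy * E₂) :
    TrivModR (lexNW ltX ltY) S (A₁ * fx * B₁, C₁ * fy * E₁)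
      (mono k (A₁, C₁) * s₁ * mono k (B₁, E₁) - mono k (A₂, C₂) * s₂ * mono k (B₂, E₂)) := by
  subst hA; subst hB; subst hC; subst hE
  have h1 : s₁.coeff (fx, fy) = 1 := gsb_monic hX hY hS hs₁ hm₁
  have h2 : s₂.coeff (gx, gy) = 1 := gsb_monic hX hY hS hs₂ hm₂
  have H := seq_case (lexNW_compat hX hY) hs₁ hs₂ hm₁ h1 hm₂ h2
    ((A₁, C₁) : NW X Y) (u, v) (B₂, E₂)
  simpa only [Prod.mk_mul_mk, mul_assoc] using H

theorem wcase_df_dg (hA : A₂ = A₁ * fx * u) (hB : B₁ = u * gx * B₂)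
    (hC : C₁ = C₂ * gy * v) (hE : E₂ = v * fy * E₁) :
    TrivModR (lexNW ltX ltY) S (A₁ * fx * B₁, C₁ * fy * E₁)
      (mono k (A₁, C₁) * s₁ * mono k (B₁, E₁) - mono k (A₂, C₂) * s₂ * mono k (B₂, E₂)) := by
  subst hA; subst hB; subst hC; subst hE
  have h1 : s₁.coeff (fx, fy) = 1 := gsb_monic hX hY hS hs₁ hm₁
  have h2 : s₂.coeff (gx, gy) = 1 := gsb_monic hX hY hS hs₂ hm₂
  have H := cross_case (lexNW_compat hX hY) hs₁ hs₂ hm₁ h1 hm₂ h2 A₁ u B₂ C₂ v E₁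
  simpa only [Prod.mk_mul_mk, mul_assoc] using H

end Wrappers
/-- if `S` is a Gröbner–Shirshov basis in `k⟨X⟩ ⊗ k⟨Y⟩` and
`w = a₁s̄₁b₁ = a₂s̄₂b₂` with `s₁, s₂ ∈ S`, then `a₁s₁b₁ - a₂s₂b₂` is trivial
modulo `(S, w)`. -/
theorem stmt_4 {k X Y : Type*} [Field k]
    (ltX : FreeMonoid X → FreeMonoid X → Prop) (ltY : FreeMonoid Y → FreeMonoid Y → Prop)
    (hX : MonOrd ltX) (hY : MonOrd ltY)
    (S : Set (MonoidAlgebra k (NW X Y))) (hS : IsGSB (lexNW ltX ltY) S)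
    (s₁ s₂ : MonoidAlgebra k (NW X Y)) (hs₁ : s₁ ∈ S) (hs₂ : s₂ ∈ S)
    (m₁ m₂ : NW X Y)
    (hm₁ : IsLeadR (lexNW ltX ltY) s₁ m₁) (hm₂ : IsLeadR (lexNW ltX ltY) s₂ m₂)
    (a₁ b₁ a₂ b₂ w : NW X Y)
    (hw₁ : w = a₁ * m₁ * b₁) (hw₂ : w = a₂ * m₂ * b₂) :
    TrivModR (lexNW ltX ltY) S w
      (mono k a₁ * s₁ * mono k b₁ - mono k a₂ * s₂ * mono k b₂) := by
  obtain ⟨fx, fy⟩ := m₁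
  obtain ⟨gx, gy⟩ := m₂
  obtain ⟨A₁, C₁⟩ := a₁
  obtain ⟨B₁, E₁⟩ := b₁
  obtain ⟨A₂, C₂⟩ := a₂
  obtain ⟨B₂, E₂⟩ := b₂
  have hXeq : A₁ * fx * B₁ = A₂ * gx * B₂ := by
    have h := congrArg Prod.fst (hw₁.symm.trans hw₂)
    simpa using h
  have hYeq : C₁ * fy * E₁ = C₂ * gy * E₂ := by
    have h := congrArg Prod.snd (hw₁.symm.trans hw₂)
    simpa using h
  subst hw₁
  have hwp : ((A₁, C₁) : NW X Y) * (fx, fy) * (B₁, E₁) = (A₁ * fx * B₁, C₁ * fy * E₁) := by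
    apply Prod.ext <;> simp
  rw [hwp]
  have hflip : ((A₁ * fx * B₁, C₁ * fy * E₁) : NW X Y) = (A₂ * gx * B₂, C₂ * gy * E₂) :=
    Prod.ext hXeq hYeq
  rcases fm_two_fact hXeq with ⟨u, hA, hB⟩ | ⟨u, hA, hB⟩ | ⟨a, b, hfx, hA, hB⟩ |
    ⟨a, b, hgx, hA, hB⟩ | ⟨a, b, hx, hlenx, hA, hB⟩ | ⟨a, b, hx, hlenx, hA, hB⟩ <;>
    rcases fm_two_fact hYeq with ⟨v, hC, hE⟩ | ⟨v, hC, hE⟩ | ⟨c, d, hfy, hC, hE⟩ |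
      ⟨c, d, hgy, hC, hE⟩ | ⟨c, d, hy, hleny, hC, hE⟩ | ⟨c, d, hy, hleny, hC, hE⟩
  -- X = df
  · exact wcase_df_df hX hY hS hs₁ hs₂ hm₁ hm₂ hA hB hC hE
  · exact wcase_df_dg hX hY hS hs₁ hs₂ hm₁ hm₂ hA hB hC hE
  · exact wcase_Xdf_YIf hX hY hS hs₁ hs₂ hm₁ hm₂ hfy hA hB hC hE
  · exact TrivModR.flip hflip (wcase_Xdg_YIf hX hY hS hs₂ hs₁ hm₂ hm₁ hgy hA hB hC hE)
  · exact wcase_Xdf_YOf hX hY hS hs₁ hs₂ hm₁ hm₂ hy hleny hA hB hC hE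
  · exact TrivModR.flip hflip (wcase_Xdg_YOf hX hY hS hs₂ hs₁ hm₂ hm₁ hy hleny hA hB hC hE)
  -- X = dg
  · exact TrivModR.flip hflip (wcase_df_dg hX hY hS hs₂ hs₁ hm₂ hm₁ hA hB hC hE)
  · exact TrivModR.flip hflip (wcase_df_df hX hY hS hs₂ hs₁ hm₂ hm₁ hA hB hC hE)
  · exact wcase_Xdg_YIf hX hY hS hs₁ hs₂ hm₁ hm₂ hfy hA hB hC hE
  · exact TrivModR.flip hflip (wcase_Xdf_YIf hX hY hS hs₂ hs₁ hm₂ hm₁ hgy hA hB hC hE)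
  · exact wcase_Xdg_YOf hX hY hS hs₁ hs₂ hm₁ hm₂ hy hleny hA hB hC hE
  · exact TrivModR.flip hflip (wcase_Xdf_YOf hX hY hS hs₂ hs₁ hm₂ hm₁ hy hleny hA hB hC hE)
  -- X = If
  · exact wcase_XIf_Ydf hX hY hS hs₁ hs₂ hm₁ hm₂ hfx hA hB hC hE
  · exact wcase_XIf_Ydg hX hY hS hs₁ hs₂ hm₁ hm₂ hfx hA hB hC hE
  · exact wcase_XIf_YIf hX hY hS hs₁ hs₂ hm₁ hm₂ hfx hfy hA hB hC hE
  · exact wcase_XIf_YIg hX hY hS hs₁ hs₂ hm₁ hm₂ hfx hgy hA hB hC hE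
  · exact wcase_XIf_YOf hX hY hS hs₁ hs₂ hm₁ hm₂ hfx hy hleny hA hB hC hE
  · exact wcase_XIf_YOg hX hY hS hs₁ hs₂ hm₁ hm₂ hfx hy hleny hA hB hC hE
  -- X = Ig
  · exact TrivModR.flip hflip (wcase_XIf_Ydg hX hY hS hs₂ hs₁ hm₂ hm₁ hgx hA hB hC hE)
  · exact TrivModR.flip hflip (wcase_XIf_Ydf hX hY hS hs₂ hs₁ hm₂ hm₁ hgx hA hB hC hE)
  · exact TrivModR.flip hflip (wcase_XIf_YIg hX hY hS hs₂ hs₁ hm₂ hm₁ hgx hfy hA hB hC hE)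
  · exact TrivModR.flip hflip (wcase_XIf_YIf hX hY hS hs₂ hs₁ hm₂ hm₁ hgx hgy hA hB hC hE)
  · exact TrivModR.flip hflip (wcase_XIf_YOg hX hY hS hs₂ hs₁ hm₂ hm₁ hgx hy hleny hA hB hC hE)
  · exact TrivModR.flip hflip (wcase_XIf_YOf hX hY hS hs₂ hs₁ hm₂ hm₁ hgx hy hleny hA hB hC hE)
  -- X = Of
  · exact wcase_XOf_Ydf hX hY hS hs₁ hs₂ hm₁ hm₂ hx hlenx hA hB hC hE
  · exact wcase_XOf_Ydg hX hY hS hs₁ hs₂ hm₁ hm₂ hx hlenx hA hB hC hE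
  · exact wcase_XOf_YIf hX hY hS hs₁ hs₂ hm₁ hm₂ hx hlenx hfy hA hB hC hE
  · exact wcase_XOf_YIg hX hY hS hs₁ hs₂ hm₁ hm₂ hx hlenx hgy hA hB hC hE
  · exact wcase_XOf_YOf hX hY hS hs₁ hs₂ hm₁ hm₂ hx hlenx hy hleny hA hB hC hE
  · exact wcase_XOf_YOg hX hY hS hs₁ hs₂ hm₁ hm₂ hx hlenx hy hleny hA hB hC hE
  -- X = Og
  · exact TrivModR.flip hflip (wcase_XOf_Ydg hX hY hS hs₂ hs₁ hm₂ hm₁ hx hlenx hA hB hC hE)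
  · exact TrivModR.flip hflip (wcase_XOf_Ydf hX hY hS hs₂ hs₁ hm₂ hm₁ hx hlenx hA hB hC hE)
  · exact TrivModR.flip hflip (wcase_XOf_YIg hX hY hS hs₂ hs₁ hm₂ hm₁ hx hlenx hfy hA hB hC hE)
  · exact TrivModR.flip hflip (wcase_XOf_YIf hX hY hS hs₂ hs₁ hm₂ hm₁ hx hlenx hgy hA hB hC hE)
  · exact TrivModR.flip hflip (wcase_XOf_YOg hX hY hS hs₂ hs₁ hm₂ hm₁ hx hlenx hy hleny hA hB hC hE)
  · exact TrivModR.flip hflip (wcase_XOf_YOf hX hY hS hs₂ hs₁ hm₂ hm₁ hx hlenx hy hleny hA hB hC hE)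
end

section
/- For any monic subset S of k⟨X⟩ ⊗ k⟨Y⟩ and any f ∈ k⟨X⟩ ⊗ k⟨Y⟩, f can be written as f = Σᵢ αᵢ aᵢsᵢbᵢ + Σⱼ βⱼuⱼ, where αᵢ, βⱼ ∈ k, aᵢ, bᵢ ∈ N, sᵢ ∈ S, uⱼ ∈ Irr(S), and all aᵢs̄ᵢbᵢ ≤ f̄ and uⱼ ≤ f̄. -/
section Stmt5Aux

lemma aux_mono_mul {k M : Type*} [Semiring k] [Monoid M] (c d : M) (s : MonoidAlgebra k M) :
    mono k c * s * mono k d = MonoidAlgebra.mapDomain (fun u => c * u * d) s := by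
  induction s using MonoidAlgebra.induction_linear with
  | zero => simp
  | add x y hx hy => rw [MonoidAlgebra.mapDomain_add, ← hx, ← hy, mul_add, add_mul]
  | single a x =>
    rw [MonoidAlgebra.mapDomain_single]
    simp [mono, MonoidAlgebra.of_apply, MonoidAlgebra.single_mul_single]

lemma aux_max {M : Type*} (lt : M → M → Prop)
    (htri : ∀ a b : M, a ≠ b → lt a b ∨ lt b a)
    (htr : ∀ {a b c : M}, lt a b → lt b c → lt a c) :
    ∀ t : Finset M, t.Nonempty → ∃ m ∈ t, ∀ u ∈ t, u ≠ m → lt u m := by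
  classical
  intro t
  induction t using Finset.induction_on with
  | empty => intro h; simp at h
  | insert a t hnotmem ih =>
    intro _
    rcases t.eq_empty_or_nonempty with rfl | hne
    · exact ⟨a, by simp, by simp⟩
    · obtain ⟨m, hm, hmax⟩ := ih hne
      have ham : a ≠ m := fun h => hnotmem (h ▸ hm)
      rcases htri a m ham with h | h
      · refine ⟨m, Finset.mem_insert_of_mem hm, ?_⟩
        intro u hu hun
        rcases Finset.mem_insert.1 hu with rfl | hu
        · exact h
        · exact hmax u hu hun
      · refine ⟨a, Finset.mem_insert_self _ _, ?_⟩
        intro u hu hua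
        rcases Finset.mem_insert.1 hu with rfl | hu
        · exact absurd rfl hua
        · by_cases hum : u = m
          · exact hum ▸ h
          · exact htr (hmax u hu hum) h

/-- the goal of Statement 5, as a predicate of `f` and `mf`. -/
def Stmt5Goal {k X Y : Type*} [Field k]
    (ltX : FreeMonoid X → FreeMonoid X → Prop) (ltY : FreeMonoid Y → FreeMonoid Y → Prop)
    (S : Set (MonoidAlgebra k (NW X Y)))
    (f : MonoidAlgebra k (NW X Y)) (mf : NW X Y) : Prop :=
    ∃ (n m : ℕ) (α : Fin n → k) (a b : Fin n → NW X Y)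
      (s : Fin n → MonoidAlgebra k (NW X Y)) (β : Fin m → k) (u : Fin m → NW X Y),
      (∀ i, s i ∈ S) ∧
      (∀ j, ∀ t ∈ S, ∀ mt : NW X Y, IsLeadR (lexNW ltX ltY) t mt →
        ∀ c d : NW X Y, u j ≠ c * mt * d) ∧
      f = (∑ i, α i • (mono k (a i) * s i * mono k (b i))) + ∑ j, β j • mono k (u j) ∧
      (∀ i, ∃ ms, IsLeadR (lexNW ltX ltY) (s i) ms ∧
        (a i * ms * b i = mf ∨ lexNW ltX ltY (a i * ms * b i) mf)) ∧
      (∀ j, u j = mf ∨ lexNW ltX ltY (u j) mf)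

end Stmt5Aux

/-- for a monic subset `S` of `k⟨X⟩ ⊗ k⟨Y⟩`, every `f` can be written as
`f = Σᵢ αᵢ aᵢsᵢbᵢ + Σⱼ βⱼuⱼ` with `sᵢ ∈ S`, `uⱼ ∈ Irr(S)`, all `aᵢs̄ᵢbᵢ ≤ f̄` and
all `uⱼ ≤ f̄`. -/
theorem stmt_5 {k X Y : Type*} [Field k]
    (ltX : FreeMonoid X → FreeMonoid X → Prop) (ltY : FreeMonoid Y → FreeMonoid Y → Prop)
    (hX : MonOrd ltX) (hY : MonOrd ltY)
    (S : Set (MonoidAlgebra k (NW X Y))) (hS : ∀ s ∈ S, MonicR (lexNW ltX ltY) s)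
    (f : MonoidAlgebra k (NW X Y)) (mf : NW X Y) (hmf : IsLeadR (lexNW ltX ltY) f mf) :
    ∃ (n m : ℕ) (α : Fin n → k) (a b : Fin n → NW X Y)
      (s : Fin n → MonoidAlgebra k (NW X Y)) (β : Fin m → k) (u : Fin m → NW X Y),
      (∀ i, s i ∈ S) ∧
      (∀ j, ∀ t ∈ S, ∀ mt : NW X Y, IsLeadR (lexNW ltX ltY) t mt →
        ∀ c d : NW X Y, u j ≠ c * mt * d) ∧
      f = (∑ i, α i • (mono k (a i) * s i * mono k (b i))) + ∑ j, β j • mono k (u j) ∧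
      (∀ i, ∃ ms, IsLeadR (lexNW ltX ltY) (s i) ms ∧
        (a i * ms * b i = mf ∨ lexNW ltX ltY (a i * ms * b i) mf)) ∧
      (∀ j, u j = mf ∨ lexNW ltX ltY (u j) mf) := by
  classical
  haveI := hX.1
  haveI := hY.1
  have htrans : ∀ {p q r : NW X Y}, lexNW ltX ltY p q → lexNW ltX ltY q r →
      lexNW ltX ltY p r := by
    rintro p q r (h1 | ⟨e1, h1⟩) (h2 | ⟨e2, h2⟩)
    · exact Or.inl (trans_of ltX h1 h2)
    · exact Or.inl (e2 ▸ h1)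
    · exact Or.inl (e1 ▸ h2)
    · exact Or.inr ⟨e1.trans e2, trans_of ltY h1 h2⟩
  have htri : ∀ p q : NW X Y, p ≠ q → lexNW ltX ltY p q ∨ lexNW ltX ltY q p := by
    intro p q hpq
    rcases trichotomous_of ltX p.1 q.1 with h | h | h
    · exact Or.inl (Or.inl h)
    · rcases trichotomous_of ltY p.2 q.2 with h2 | h2 | h2
      · exact Or.inl (Or.inr ⟨h, h2⟩)
      · exact absurd (Prod.ext h h2) hpq
      · exact Or.inr (Or.inr ⟨h.symm, h2⟩)
    · exact Or.inr (Or.inl h)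
  have hirr : ∀ p : NW X Y, ¬ lexNW ltX ltY p p := by
    rintro p (h | ⟨-, h⟩)
    · exact irrefl_of ltX _ h
    · exact irrefl_of ltY _ h
  have hwf : WellFounded (lexNW ltX ltY) := by
    refine Subrelation.wf ?_ (WellFounded.prod_lex hX.2.1 hY.2.1)
    rintro ⟨p1, p2⟩ ⟨q1, q2⟩ (h | ⟨e, h⟩)
    · exact Prod.Lex.left _ _ h
    · cases e; exact Prod.Lex.right _ h
  have hcomp : ∀ u v w₁ w₂ : NW X Y, lexNW ltX ltY u v →
      lexNW ltX ltY (w₁ * u * w₂) (w₁ * v * w₂) := by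
    rintro u v w₁ w₂ (h | ⟨e, h⟩)
    · exact Or.inl (hX.2.2 _ _ _ _ h)
    · exact Or.inr ⟨by simp only [Prod.fst_mul, e], hY.2.2 _ _ _ _ h⟩
  have huniq : ∀ (g : MonoidAlgebra k (NW X Y)) (m₁ m₂ : NW X Y),
      IsLeadR (lexNW ltX ltY) g m₁ → IsLeadR (lexNW ltX ltY) g m₂ → m₁ = m₂ := by
    intro g m₁ m₂ h1 h2
    by_contra hne
    exact hirr m₁ (htrans (h2.2 m₁ h1.1 hne) (h1.2 m₂ h2.1 (Ne.symm hne)))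
  have hlead : ∀ g : MonoidAlgebra k (NW X Y), g ≠ 0 →
      ∃ m, IsLeadR (lexNW ltX ltY) g m := by
    intro g hgne
    obtain ⟨m, hm, hmax⟩ := aux_max (lexNW ltX ltY) htri (fun h1 h2 => htrans h1 h2)
      g.coeff.support (Finsupp.support_nonempty_iff.2 (fun h => hgne (MonoidAlgebra.coeff_eq_zero.1 h)))
    exact ⟨m, hm, hmax⟩
  suffices key : ∀ w : NW X Y, ∀ g : MonoidAlgebra k (NW X Y),
      IsLeadR (lexNW ltX ltY) g w → Stmt5Goal ltX ltY S g w from key mf f hmf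
  intro w
  refine hwf.induction
    (C := fun w => ∀ g : MonoidAlgebra k (NW X Y),
      IsLeadR (lexNW ltX ltY) g w → Stmt5Goal ltX ltY S g w) w ?_
  clear w
  intro w IH g hg
  by_cases hred : ∃ s ∈ S, ∃ ms c d : NW X Y,
      IsLeadR (lexNW ltX ltY) s ms ∧ w = c * ms * d
  · -- the leading.coeff word of g is reducible
    obtain ⟨s, hsS, ms, c, d, hms, hw⟩ := hred
    have hs1 : s.coeff ms = 1 := by
      obtain ⟨ms', hms', h1⟩ := hS s hsS
      rw [huniq s ms ms' hms hms']; exact h1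
    have hinj : Function.Injective (fun u : NW X Y => c * u * d) := by
      intro u v huv
      exact mul_left_cancel (mul_right_cancel huv)
    have hTmap : mono k c * s * mono k d
        = MonoidAlgebra.mapDomain (fun u : NW X Y => c * u * d) s := aux_mono_mul c d s
    have hTw : (mono k c * s * mono k d).coeff w = 1 := by
      rw [hTmap, hw]
      have := Finsupp.mapDomain_apply hinj s.coeff ms
      simpa [hs1] using this
    set G := g - g.coeff w • (mono k c * s * mono k d) with hG
    have hGw : G.coeff w = 0 := by
      rw [hG, MonoidAlgebra.coeff_sub, Finsupp.sub_apply, MonoidAlgebra.coeff_smul, Finsupp.smul_apply, hTw, smul_eq_mul, mul_one, sub_self]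
    have hGlt : ∀ v ∈ G.coeff.support, lexNW ltX ltY v w := by
      intro v hv
      have hvne : v ≠ w := by
        intro h; rw [h] at hv; exact (Finsupp.mem_support_iff.1 hv) hGw
      have hv0 : G.coeff v ≠ 0 := Finsupp.mem_support_iff.1 hv
      by_cases hfv : g.coeff v = 0
      · have hTv : (mono k c * s * mono k d).coeff v ≠ 0 := by
          intro h0
          apply hv0
          rw [hG, MonoidAlgebra.coeff_sub, Finsupp.sub_apply, MonoidAlgebra.coeff_smul, Finsupp.smul_apply, hfv, h0, smul_zero, sub_zero]
        have hmem : v ∈ (MonoidAlgebra.mapDomain (fun u : NW X Y => c * u * d) s).coeff.support := by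
          rw [← hTmap]; exact Finsupp.mem_support_iff.2 hTv
        obtain ⟨x, hx, hxv⟩ := Finset.mem_image.1 (Finsupp.mapDomain_support hmem)
        have hxv' : c * x * d = v := hxv
        have hxms : x ≠ ms := by
          intro h; apply hvne; rw [← hxv', h, hw]
        have h2 := hcomp x ms c d (hms.2 x hx hxms)
        rw [← hw] at h2
        rw [hxv'] at h2
        exact h2
      · exact hg.2 v (Finsupp.mem_support_iff.2 hfv) hvne
    by_cases hG0 : G = 0
    · refine ⟨1, 0, fun _ => g.coeff w, fun _ => c, fun _ => d, fun _ => s,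
        fun j => j.elim0, fun j => j.elim0, fun _ => hsS, fun j => j.elim0, ?_,
        fun _ => ⟨ms, hms, Or.inl hw.symm⟩, fun j => j.elim0⟩
      have hzero : g - g.coeff w • (mono k c * s * mono k d) = 0 := hG.symm.trans hG0
      simpa using sub_eq_zero.1 hzero
    · obtain ⟨m', hm's, hm'max⟩ := hlead G hG0
      have hm'w : lexNW ltX ltY m' w := hGlt m' hm's
      obtain ⟨n, m, α, a, b, s', β, u, c1, c2, c3, c4, c5⟩ := IH m' hm'w G ⟨hm's, hm'max⟩
      refine ⟨n + 1, m, Fin.cons (g.coeff w) α, Fin.cons c a, Fin.cons d b, Fin.cons s s',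
        β, u, ?_, c2, ?_, ?_, ?_⟩
      · intro i
        rcases Fin.eq_zero_or_eq_succ i with rfl | ⟨j, rfl⟩
        · simpa using hsS
        · simpa using c1 j
      · have hsum : g = g.coeff w • (mono k c * s * mono k d) + G := by rw [hG]; abel
        rw [c3] at hsum
        conv_lhs => rw [hsum]
        rw [Fin.sum_univ_succ]
        simp only [Fin.cons_zero, Fin.cons_succ]
        abel
      · intro i
        rcases Fin.eq_zero_or_eq_succ i with rfl | ⟨j, rfl⟩
        · simp only [Fin.cons_zero]
          exact ⟨ms, hms, Or.inl hw.symm⟩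
        · obtain ⟨msj, hlj, hj⟩ := c4 j
          refine ⟨msj, by simpa using hlj, Or.inr ?_⟩
          simp only [Fin.cons_succ]
          rcases hj with h | h
          · rw [h]; exact hm'w
          · exact htrans h hm'w
      · intro j
        rcases c5 j with h | h
        · exact Or.inr (by rw [h]; exact hm'w)
        · exact Or.inr (htrans h hm'w)
  · -- the leading.coeff word of g is irreducible
    push_neg at hred
    have hmono_w : (mono k w : MonoidAlgebra k (NW X Y)).coeff w = 1 := by
      rw [mono, MonoidAlgebra.of_apply]
      exact Finsupp.single_eq_same
    set G := g - g.coeff w • mono k w with hG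
    have hGw : G.coeff w = 0 := by
      rw [hG, MonoidAlgebra.coeff_sub, Finsupp.sub_apply, MonoidAlgebra.coeff_smul, Finsupp.smul_apply, hmono_w, smul_eq_mul, mul_one, sub_self]
    have hGlt : ∀ v ∈ G.coeff.support, lexNW ltX ltY v w := by
      intro v hv
      have hvne : v ≠ w := by
        intro h; rw [h] at hv; exact (Finsupp.mem_support_iff.1 hv) hGw
      have hv0 : G.coeff v ≠ 0 := Finsupp.mem_support_iff.1 hv
      have hmv : (mono k w : MonoidAlgebra k (NW X Y)).coeff v = 0 := by
        rw [mono, MonoidAlgebra.of_apply]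
        exact Finsupp.single_eq_of_ne' (Ne.symm hvne)
      have hfv : g.coeff v ≠ 0 := by
        intro h0; apply hv0
        rw [hG, MonoidAlgebra.coeff_sub, Finsupp.sub_apply, MonoidAlgebra.coeff_smul, Finsupp.smul_apply, h0, hmv, smul_zero, sub_zero]
      exact hg.2 v (Finsupp.mem_support_iff.2 hfv) hvne
    by_cases hG0 : G = 0
    · refine ⟨0, 1, fun i => i.elim0, fun i => i.elim0, fun i => i.elim0, fun i => i.elim0,
        fun _ => g.coeff w, fun _ => w, fun i => i.elim0, ?_, ?_, fun i => i.elim0,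
        fun _ => Or.inl rfl⟩
      · intro j t htS mt hmt cc dd
        exact hred t htS mt cc dd hmt
      · have hzero : g - g.coeff w • mono k w = 0 := hG.symm.trans hG0
        simpa using sub_eq_zero.1 hzero
    · obtain ⟨m', hm's, hm'max⟩ := hlead G hG0
      have hm'w : lexNW ltX ltY m' w := hGlt m' hm's
      obtain ⟨n, m, α, a, b, s', β, u, c1, c2, c3, c4, c5⟩ := IH m' hm'w G ⟨hm's, hm'max⟩
      refine ⟨n, m + 1, α, a, b, s', Fin.cons (g.coeff w) β, Fin.cons w u, c1, ?_, ?_, ?_, ?_⟩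
      · intro j t htS mt hmt cc dd
        rcases Fin.eq_zero_or_eq_succ j with rfl | ⟨j', rfl⟩
        · simp only [Fin.cons_zero]
          exact hred t htS mt cc dd hmt
        · simp only [Fin.cons_succ]
          exact c2 j' t htS mt hmt cc dd
      · have hsum : g = G + g.coeff w • mono k w := by rw [hG]; abel
        rw [c3] at hsum
        conv_lhs => rw [hsum]
        rw [Fin.sum_univ_succ]
        simp only [Fin.cons_zero, Fin.cons_succ]
        abel
      · intro i
        obtain ⟨msi, hli, hi⟩ := c4 i
        refine ⟨msi, hli, Or.inr ?_⟩
        rcases hi with h | h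
        · rw [h]; exact hm'w
        · exact htrans h hm'w
      · intro j
        rcases Fin.eq_zero_or_eq_succ j with rfl | ⟨j', rfl⟩
        · exact Or.inl (Fin.cons_zero _ _)
        · simp only [Fin.cons_succ]
          rcases c5 j' with h | h
          · exact Or.inr (by rw [h]; exact hm'w)
          · exact Or.inr (htrans h hm'w)
end
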